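/- arXiv:1909.11884 — 4 statements merged into one kernel-verified Lean document; each statement's English description precedes it below -/
import Mathlib

section
/- Let d ≥ 2 and let K be a convex body in S^d. Then no set of at most d points lying on a (d−1)-dimensional great sphere of S^d disjoint from K illuminates K; consequently I_{S^d}(K) ≥ d+1. -/
open RealInnerProductSpace Metric Set

noncomputable section

/-- Euclidean `n`-space. -/
abbrev Euc (n : ℕ) := EuclideanSpace ℝ (Fin n)

/-- The unit sphere `S^d` in `ℝ^{d+1}`. -/
def uSphere (d : ℕ) : Set (Euc (d + 1)) := Metric.sphere 0 1

/-- Radial (normalizing) projection onto the unit sphere. -/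
def nproj {n : ℕ} (x : Euc n) : Euc n := ‖x‖⁻¹ • x

/-- The spherical segment (shorter great-circle arc) with endpoints `p` and `q`
(meaningful when `p ≠ -q`). -/
def sphSeg {n : ℕ} (p q : Euc n) : Set (Euc n) :=
  (fun t : ℝ => nproj ((1 - t) • p + t • q)) '' Set.Icc 0 1

/-- The relative interior of the spherical segment with endpoints `p` and `q`. -/
def sphOpenSeg {n : ℕ} (p q : Euc n) : Set (Euc n) :=
  (fun t : ℝ => nproj ((1 - t) • p + t • q)) '' Set.Ioo 0 1

/-- The great circle through `p` and `q`. -/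
def greatCircle (d : ℕ) (p q : Euc (d + 1)) : Set (Euc (d + 1)) :=
  {z ∈ uSphere d | z ∈ Submodule.span ℝ {p, q}}

/-- The open hemisphere with center `x`. -/
def openHemi (d : ℕ) (x : Euc (d + 1)) : Set (Euc (d + 1)) :=
  {y ∈ uSphere d | 0 < ⟪x, y⟫}

/-- The `(d-1)`-dimensional great sphere of `S^d` with pole `u`. -/
def greatSphere (d : ℕ) (u : Euc (d + 1)) : Set (Euc (d + 1)) :=
  {y ∈ uSphere d | ⟪u, y⟫ = 0}

/-- A set `C ⊆ S^d` is spherically convex if it is contained in an open hemisphere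
and contains the shorter arc connecting any two of its points. -/
def SphConvex (d : ℕ) (C : Set (Euc (d + 1))) : Prop :=
  C ⊆ uSphere d ∧ (∃ x ∈ uSphere d, C ⊆ openHemi d x) ∧
    ∀ p ∈ C, ∀ q ∈ C, sphSeg p q ⊆ C

/-- The interior of `K` relative to the sphere `S^d`. -/
def sphInt (d : ℕ) (K : Set (Euc (d + 1))) : Set (Euc (d + 1)) :=
  {x ∈ uSphere d | ∃ U : Set (Euc (d + 1)), IsOpen U ∧ x ∈ U ∧ U ∩ uSphere d ⊆ K}

/-- The boundary of a closed set `K ⊆ S^d` relative to the sphere `S^d`. -/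
def sphBd (d : ℕ) (K : Set (Euc (d + 1))) : Set (Euc (d + 1)) := K \ sphInt d K

/-- A convex body in `S^d`: a compact spherically convex set with nonempty interior
relative to `S^d`. -/
def IsSphBody (d : ℕ) (K : Set (Euc (d + 1))) : Prop :=
  IsCompact K ∧ SphConvex d K ∧ (sphInt d K).Nonempty

/-- The boundary point `q` of `K` is illuminated from the point `p`. -/
def SphIlluminated (d : ℕ) (K : Set (Euc (d + 1))) (p q : Euc (d + 1)) : Prop :=
  q ≠ -p ∧ sphSeg p q ∩ sphInt d K = ∅ ∧ (greatCircle d p q ∩ sphInt d K).Nonempty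

/-- The set `S` illuminates the convex body `K ⊆ S^d`. -/
def SphIlluminates (d : ℕ) (K S : Set (Euc (d + 1))) : Prop :=
  ∀ q ∈ sphBd d K, ∃ p ∈ S, SphIlluminated d K p q

/-- The illumination number of a convex body `K` in `S^d`: the smallest cardinality of
a set illuminating `K` and lying on a `(d-1)`-dimensional great sphere disjoint from `K`. -/
def sphIllumNumber (d : ℕ) (K : Set (Euc (d + 1))) : ℕ∞ :=
  sInf {n : ℕ∞ | ∃ u ∈ uSphere d, greatSphere d u ∩ K = ∅ ∧
    ∃ S : Finset (Euc (d + 1)), ↑S ⊆ greatSphere d u ∧ SphIlluminates d K ↑S ∧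
      (S.card : ℕ∞) = n}

/-- A convex body in a Euclidean space: compact, convex, with nonempty interior. -/
def IsConvexBody {n : ℕ} (K : Set (Euc n)) : Prop :=
  IsCompact K ∧ Convex ℝ K ∧ (interior K).Nonempty

/-- The boundary point `p` of `K` is illuminated from the direction `v`. -/
def IlluminatedDir {n : ℕ} (K : Set (Euc n)) (v p : Euc n) : Prop :=
  ∃ t : ℝ, 0 < t ∧ p + t • v ∈ interior K

/-- The finite set of unit vectors `D` illuminates the convex body `K`. -/
def IlluminatesDirs {n : ℕ} (D : Finset (Euc n)) (K : Set (Euc n)) : Prop :=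
  (∀ v ∈ D, ‖v‖ = 1) ∧ ∀ p ∈ frontier K, ∃ v ∈ D, IlluminatedDir K v p

/-- The illumination number of a convex body in Euclidean space. -/
def illumNumber {n : ℕ} (K : Set (Euc n)) : ℕ∞ :=
  sInf {m : ℕ∞ | ∃ D : Finset (Euc n), IlluminatesDirs D K ∧ (D.card : ℕ∞) = m}

/-- The illumination number of a convex body `K` of an affine subspace of a Euclidean
space, computed within the affine span of `K` (directions are parallel to the affine
span; interior and boundary are relative to the affine span). -/
def intIllumNumber {n : ℕ} (K : Set (Euc n)) : ℕ∞ :=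
  sInf {m : ℕ∞ | ∃ D : Finset (Euc n),
    (∀ v ∈ D, ‖v‖ = 1 ∧ v ∈ (affineSpan ℝ K).direction) ∧
    (∀ p ∈ intrinsicFrontier ℝ K, ∃ v ∈ D, ∃ t : ℝ, 0 < t ∧
      p + t • v ∈ intrinsicInterior ℝ K) ∧
    (D.card : ℕ∞) = m}

/-- A face of a convex body `K` in Euclidean space: a convex subset `F ⊆ K` such that
any segment of `K` whose relative interior meets `F` is contained in `F`. -/
def IsFace {n : ℕ} (K F : Set (Euc n)) : Prop :=
  F ⊆ K ∧ Convex ℝ F ∧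
    ∀ x ∈ K, ∀ y ∈ K, (openSegment ℝ x y ∩ F).Nonempty → segment ℝ x y ⊆ F

/-- The dimension of a subset of a Euclidean space (dimension of its affine hull). -/
def faceDim {n : ℕ} (F : Set (Euc n)) : ℕ := Module.finrank ℝ (vectorSpan ℝ F)

/-- A face of a convex body `K` in `S^d`: a spherically convex subset `F ⊆ K` such that
any spherical segment of `K` whose relative interior meets `F` is contained in `F`. -/
def IsSphFace (d : ℕ) (K F : Set (Euc (d + 1))) : Prop :=
  F ⊆ K ∧ SphConvex d F ∧
    ∀ p ∈ K, ∀ q ∈ K, (sphOpenSeg p q ∩ F).Nonempty → sphSeg p q ⊆ F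

/-- The (spherical) dimension of a subset `F` of `S^d`: one less than the dimension of
its linear hull. -/
def sphFaceDim (d : ℕ) (F : Set (Euc (d + 1))) : ℕ :=
  Module.finrank ℝ (Submodule.span ℝ F) - 1

/-- The polar body of a convex body `K ⊆ S^d`. -/
def sphPolar (d : ℕ) (K : Set (Euc (d + 1))) : Set (Euc (d + 1)) :=
  {x ∈ uSphere d | ∀ y ∈ K, ⟪x, y⟫ ≤ 0}

/-- An exposed face of a convex body `L` in `S^d`: a nonempty intersection of `L`
with a supporting great sphere. -/
def IsSphExposedFace (d : ℕ) (L F : Set (Euc (d + 1))) : Prop :=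
  F.Nonempty ∧ ∃ u ∈ uSphere d, (∀ y ∈ L, ⟪u, y⟫ ≤ 0) ∧ F = {y ∈ L | ⟪u, y⟫ = 0}

/-- The conjugate face of an exposed face `F` of a convex body `K ⊆ S^d`. -/
def conjFace (d : ℕ) (K F : Set (Euc (d + 1))) : Set (Euc (d + 1)) :=
  {x ∈ sphPolar d K | ∀ y ∈ F, ⟪x, y⟫ = 0}

/-- Two Euclidean convex bodies are combinatorially equivalent if there is a
homeomorphism between their boundaries mapping faces to faces. -/
def CombEquiv {n : ℕ} (K K' : Set (Euc n)) : Prop :=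
  ∃ h : (frontier K) ≃ₜ (frontier K'),
    ∀ X : Set (frontier K),
      IsFace K (Subtype.val '' X) ↔ IsFace K' (Subtype.val '' (h '' X))

/-- The combinatorial illumination number of a Euclidean convex body `K`: the smallest
number of directions that illuminate some convex body combinatorially equivalent to `K`. -/
def combIllumNumber {n : ℕ} (K : Set (Euc n)) : ℕ∞ :=
  sInf {m : ℕ∞ | ∃ K' : Set (Euc n), IsConvexBody K' ∧ CombEquiv K K' ∧
    ∃ D : Finset (Euc n), IlluminatesDirs D K' ∧ (D.card : ℕ∞) = m}

/-- A convex polytope in `S^d`: a convex body that is the intersection of finitely many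
closed hemispheres. -/
def IsSphPolytope (d : ℕ) (P : Set (Euc (d + 1))) : Prop :=
  IsSphBody d P ∧ ∃ s : Finset (Euc (d + 1)), (∀ u ∈ s, u ∈ uSphere d) ∧
    P = uSphere d ∩ {y | ∀ u ∈ s, ⟪u, y⟫ ≤ 0}

end
noncomputable section

lemma mem_uSphere_iff' {d : ℕ} {x : Euc (d + 1)} : x ∈ uSphere d ↔ ‖x‖ = 1 := by
  simp [uSphere, mem_sphere_zero_iff_norm]

lemma norm_nproj_of_ne {n : ℕ} {x : Euc n} (hx : x ≠ 0) : ‖nproj x‖ = 1 := by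
  rw [nproj, norm_smul, norm_inv, norm_norm, inv_mul_cancel₀ (norm_ne_zero_iff.2 hx)]

lemma sphInt_subset' (d : ℕ) (K : Set (Euc (d + 1))) : sphInt d K ⊆ K := by
  rintro x ⟨hx, U, hU, hxU, hUK⟩
  exact hUK ⟨hxU, hx⟩

/-- Existence of a nonzero vector orthogonal to `u` and making nonpositive inner
product with at most `d` given vectors. -/
lemma exists_c (d : ℕ) (hd : 2 ≤ d) (u : Euc (d + 1)) (hu : ‖u‖ = 1)
    (S : Finset (Euc (d + 1))) (hScard : S.card ≤ d) (huS : ∀ p ∈ S, ⟪u, p⟫ = 0) :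
    ∃ c : Euc (d + 1), c ≠ 0 ∧ ⟪u, c⟫ = 0 ∧ ∀ p ∈ S, ⟪p, c⟫ ≤ 0 := by
  classical
  set F : Finset (Euc (d + 1)) := insert u S with hF
  by_cases hW : Submodule.span ℝ (F : Set (Euc (d + 1))) = ⊤
  · have huS' : u ∉ S := by
      intro h
      have h2 := huS u h
      rw [real_inner_self_eq_norm_sq, hu] at h2
      norm_num at h2
    have hcardF : F.card = S.card + 1 := Finset.card_insert_of_notMem huS'
    let Φ : Euc (d + 1) →ₗ[ℝ] (↥F → ℝ) :=
      { toFun := fun x v => ⟪(v : Euc (d + 1)), x⟫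
        map_add' := by
          intro x y; funext v
          simp only [Pi.add_apply]
          exact inner_add_right _ _ _
        map_smul' := by
          intro r x; funext v
          simp only [RingHom.id_apply, Pi.smul_apply, smul_eq_mul]
          exact real_inner_smul_right _ _ _ }
    have hinj : Function.Injective Φ := by
      rw [← LinearMap.ker_eq_bot, Submodule.eq_bot_iff]
      intro x hx
      have hx0 : Φ x = 0 := hx
      have hx' : ∀ v ∈ (F : Set (Euc (d + 1))), ⟪v, x⟫ = 0 := by
        intro v hv
        exact congrFun hx0 ⟨v, hv⟩
      have hall : ∀ y ∈ Submodule.span ℝ (F : Set (Euc (d + 1))), ⟪y, x⟫ = 0 := by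
        intro y hy
        induction hy using Submodule.span_induction with
        | mem a ha => exact hx' a ha
        | zero => simp
        | add a b _ _ ha hb => rw [inner_add_left, ha, hb, add_zero]
        | smul r a _ ha => rw [real_inner_smul_left, ha, mul_zero]
      have := hall x (hW ▸ Submodule.mem_top)
      exact inner_self_eq_zero.mp this
    have h1 : Module.finrank ℝ (Euc (d + 1)) = d + 1 := finrank_euclideanSpace_fin
    have h2 : Module.finrank ℝ (↥F → ℝ) = F.card := by
      rw [Module.finrank_pi, Fintype.card_coe]
    have hle : d + 1 ≤ F.card := by
      have := LinearMap.finrank_le_finrank_of_injective hinj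
      rwa [h1, h2] at this
    have hcardS : S.card = d := by omega
    have heq : Module.finrank ℝ (Euc (d + 1))
        = Module.finrank ℝ (↥F → ℝ) := by
      rw [h1, h2, hcardF, hcardS]
    let e := LinearMap.linearEquivOfInjective Φ hinj heq
    obtain ⟨p, hp⟩ : S.Nonempty := Finset.card_pos.mp (by omega)
    have hpu : p ≠ u := fun h => huS' (h ▸ hp)
    let g : ↥F → ℝ := fun v => if (v : Euc (d + 1)) = u then 0 else -1
    have hΦ : Φ (e.symm g) = g := by
      have h5 : e (e.symm g) = g := e.apply_symm_apply g
      rwa [show ∀ x, e x = Φ x from fun x => LinearMap.linearEquivOfInjective_apply hinj heq x] at h5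
    refine ⟨e.symm g, ?_, ?_, ?_⟩
    · intro h0
      have hz : Φ (e.symm g) ⟨p, Finset.mem_insert_of_mem hp⟩ = 0 := by rw [h0]; simp
      rw [hΦ] at hz
      simp only [g, hpu, if_false] at hz
      norm_num at hz
    · have := congrFun hΦ ⟨u, Finset.mem_insert_self u S⟩
      simpa [Φ, g] using this
    · intro p' hp'
      have h3 := congrFun hΦ ⟨p', Finset.mem_insert_of_mem hp'⟩
      rw [show ⟪p', e.symm g⟫ = g ⟨p', Finset.mem_insert_of_mem hp'⟩ from h3]
      by_cases h : p' = u <;> simp [g, h]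
  · have hne : (Submodule.span ℝ (F : Set (Euc (d + 1))))ᗮ ≠ ⊥ := by
      intro h; exact hW (Submodule.orthogonal_eq_bot_iff.mp h)
    obtain ⟨c, hc, hc0⟩ := Submodule.exists_mem_ne_zero_of_ne_bot hne
    have hcall : ∀ w ∈ Submodule.span ℝ (F : Set (Euc (d + 1))), ⟪w, c⟫ = 0 :=
      (Submodule.mem_orthogonal _ c).mp hc
    refine ⟨c, hc0, ?_, ?_⟩
    · exact hcall u (Submodule.subset_span (by simp [hF]))
    · intro p hp
      exact le_of_eq (hcall p (Submodule.subset_span (by simp [hF, hp])))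

/-- A spherically convex set disjoint from the great sphere of `u` cannot contain
points on both sides. -/
lemma sign_lemma (d : ℕ) (K : Set (Euc (d + 1))) (hconv : SphConvex d K)
    (u : Euc (d + 1)) (hdisj : greatSphere d u ∩ K = ∅)
    {p q : Euc (d + 1)} (hp : p ∈ K) (hq : q ∈ K) (hup : 0 < ⟪u, p⟫)
    (huq : ⟪u, q⟫ < 0) : False := by
  obtain ⟨hKs, ⟨x, hx, hhemi⟩, harc⟩ := hconv
  set a := ⟪u, p⟫ with ha
  set b := ⟪u, q⟫ with hb
  have hab : 0 < a - b := by linarith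
  set t := a / (a - b) with ht
  have ht0 : 0 ≤ t := le_of_lt (div_pos hup hab)
  have ht1 : t ≤ 1 := by rw [ht, div_le_one hab]; linarith
  set v := (1 - t) • p + t • q with hv
  have hxp := (hhemi hp).2
  have hxq := (hhemi hq).2
  have hxv : 0 < ⟪x, v⟫ := by
    rw [hv, inner_add_right, real_inner_smul_right, real_inner_smul_right]
    have hm : 0 < min ⟪x, p⟫ ⟪x, q⟫ := lt_min hxp hxq
    have hcal : min ⟪x, p⟫ ⟪x, q⟫ = (1 - t) * min ⟪x, p⟫ ⟪x, q⟫ + t * min ⟪x, p⟫ ⟪x, q⟫ := by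
      ring
    have hle : (1 - t) * min ⟪x, p⟫ ⟪x, q⟫ + t * min ⟪x, p⟫ ⟪x, q⟫
        ≤ (1 - t) * ⟪x, p⟫ + t * ⟪x, q⟫ := by
      gcongr
      · exact min_le_left _ _
      · exact min_le_right _ _
    linarith [hcal ▸ hle]
  have hv0 : v ≠ 0 := by
    intro h
    rw [h, inner_zero_right] at hxv
    exact lt_irrefl 0 hxv
  have hyK : nproj v ∈ K := harc p hp q hq ⟨t, ⟨ht0, ht1⟩, by rw [hv]⟩
  have hy : nproj v ∈ greatSphere d u := by
    refine ⟨mem_uSphere_iff'.mpr (norm_nproj_of_ne hv0), ?_⟩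
    rw [nproj, real_inner_smul_right, hv, inner_add_right, real_inner_smul_right,
      real_inner_smul_right, ← ha, ← hb]
    have hz : (1 - t) * a + t * b = 0 := by
      rw [ht]
      field_simp
      ring
    rw [hz, mul_zero]
  have : nproj v ∈ greatSphere d u ∩ K := ⟨hy, hyK⟩
  rw [hdisj] at this
  exact this

/-- Key lemma: if `K` lies in the open hemisphere of `u`, at most `d` points on the
great sphere of `u` cannot illuminate `K`. -/
lemma key_lemma (d : ℕ) (hd : 2 ≤ d) (K : Set (Euc (d + 1))) (hK : IsSphBody d K)
    (u : Euc (d + 1)) (hu : ‖u‖ = 1) (hpos : ∀ y ∈ K, 0 < ⟪u, y⟫)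
    (S : Finset (Euc (d + 1))) (hSu : ∀ p ∈ S, ⟪u, p⟫ = 0) (hcard : S.card ≤ d) :
    ¬ SphIlluminates d K ↑S := by
  obtain ⟨hKc, hKconv, hKint⟩ := hK
  obtain ⟨c, hc0, hcu, hcS⟩ := exists_c d hd u hu S hcard hSu
  have hKne : K.Nonempty := ⟨hKint.choose, sphInt_subset' d K hKint.choose_spec⟩
  have hcont : ContinuousOn (fun y => ⟪c, y⟫ / ⟪u, y⟫) K := by
    apply ContinuousOn.div
    · exact (continuous_const.inner continuous_id).continuousOn
    · exact (continuous_const.inner continuous_id).continuousOn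
    · exact fun y hy => ne_of_gt (hpos y hy)
  obtain ⟨q, hqK, hqmax⟩ := hKc.exists_isMaxOn hKne hcont
  set M := ⟪c, q⟫ / ⟪u, q⟫ with hM
  set c' := c - M • u with hc'
  have hc'q : ⟪c', q⟫ = 0 := by
    rw [hc', inner_sub_left, real_inner_smul_left, hM,
      div_mul_cancel₀ _ (ne_of_gt (hpos q hqK)), sub_self]
  have hc'0 : c' ≠ 0 := by
    intro h
    have hcMu : c = M • u := by rwa [hc', sub_eq_zero] at h
    rw [hcMu, real_inner_smul_right, real_inner_self_eq_norm_sq, hu] at hcu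
    norm_num at hcu
    rw [hcMu, hcu, zero_smul] at hc0
    exact hc0 rfl
  have hKle : ∀ y ∈ K, ⟪c', y⟫ ≤ 0 := by
    intro y hy
    have h1 : ⟪c, y⟫ / ⟪u, y⟫ ≤ M := hqmax hy
    rw [div_le_iff₀ (hpos y hy)] at h1
    rw [hc', inner_sub_left, real_inner_smul_left]
    linarith
  have hint : ∀ z ∈ sphInt d K, ⟪c', z⟫ < 0 := by
    rintro z ⟨hzs, U, hUo, hzU, hUK⟩
    have hzK : z ∈ K := hUK ⟨hzU, hzs⟩
    rcases (hKle z hzK).lt_or_eq with h | h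
    · exact h
    exfalso
    have hz1 : ‖z‖ = 1 := mem_uSphere_iff'.mp hzs
    have hcont2 : ContinuousAt (fun ε : ℝ => nproj (z + ε • c')) 0 := by
      have h1 : ContinuousAt (fun ε : ℝ => z + ε • c') 0 :=
        (continuous_const.add (continuous_id.smul continuous_const)).continuousAt
      have h2 : ContinuousAt (fun x : Euc (d + 1) => ‖x‖⁻¹ • x) ((fun ε : ℝ => z + ε • c') 0) :=
        ContinuousAt.smul
          ((continuous_norm.continuousAt).inv₀ (by simp [hz1])) continuousAt_id
      have h3 : ContinuousAt ((fun x : Euc (d + 1) => ‖x‖⁻¹ • x) ∘ (fun ε : ℝ => z + ε • c')) 0 :=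
        ContinuousAt.comp (x := (0 : ℝ)) (f := fun ε : ℝ => z + ε • c')
          (g := fun x : Euc (d + 1) => ‖x‖⁻¹ • x) h2 h1
      exact h3
    have h0 : nproj (z + (0 : ℝ) • c') = z := by simp [nproj, hz1]
    have hU' : ∀ᶠ ε in nhds (0 : ℝ), nproj (z + ε • c') ∈ U := by
      apply hcont2.eventually_mem
      rw [h0]
      exact hUo.mem_nhds hzU
    obtain ⟨δ, hδ, hball⟩ := Metric.eventually_nhds_iff.mp hU'
    set ε := δ / 2 with hε'
    have hε : 0 < ε := by positivity
    have hmem : nproj (z + ε • c') ∈ U := by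
      apply hball
      rw [Real.dist_eq, sub_zero, abs_of_pos hε]
      linarith
    have hvne : z + ε • c' ≠ 0 := by
      intro hcontra
      have h5 : ⟪z, z + ε • c'⟫ = 0 := by rw [hcontra, inner_zero_right]
      rw [inner_add_right, real_inner_smul_right, real_inner_self_eq_norm_sq, hz1,
        real_inner_comm, h] at h5
      norm_num at h5
    have hK2 : nproj (z + ε • c') ∈ K :=
      hUK ⟨hmem, mem_uSphere_iff'.mpr (norm_nproj_of_ne hvne)⟩
    have hval : 0 < ⟪c', nproj (z + ε • c')⟫ := by
      rw [nproj, real_inner_smul_right, inner_add_right, real_inner_smul_right, ← h]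
      have hp1 : 0 < ‖z + ε • c'‖⁻¹ := inv_pos.mpr (norm_pos_iff.mpr hvne)
      have hp2 : 0 < ⟪c', c'⟫ := by
        rw [real_inner_self_eq_norm_sq]
        exact pow_pos (norm_pos_iff.mpr hc'0) 2
      have : (0 : ℝ) < ⟪c', z⟫ + ε * ⟪c', c'⟫ := by
        rw [← h]
        nlinarith
      nlinarith
    exact absurd (hKle _ hK2) (not_le.mpr hval)
  intro hIll
  have hqbd : q ∈ sphBd d K :=
    ⟨hqK, fun hqint => absurd hc'q (ne_of_lt (hint q hqint))⟩
  obtain ⟨p, hpS, hnp, hseg, z, ⟨hzs, hzspan⟩, hzint⟩ := hIll q hqbd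
  obtain ⟨a, b, hab⟩ := Submodule.mem_span_pair.mp hzspan
  have hz1 : ‖z‖ = 1 := mem_uSphere_iff'.mp hzs
  have hzK : z ∈ K := sphInt_subset' d K hzint
  have hup : ⟪u, p⟫ = 0 := hSu p hpS
  have hb : 0 < b := by
    have h1 : ⟪u, z⟫ = b * ⟪u, q⟫ := by
      rw [← hab, inner_add_right, real_inner_smul_right, real_inner_smul_right, hup]
      ring
    have h2 := hpos z hzK
    have h3 := hpos q hqK
    nlinarith
  have ha : a < 0 := by
    by_contra hcon
    push_neg at hcon
    have habpos : 0 < a + b := by linarith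
    have hzseg : z ∈ sphSeg p q := by
      refine ⟨b / (a + b), ⟨by positivity, by rw [div_le_one habpos]; linarith⟩, ?_⟩
      show nproj ((1 - b / (a + b)) • p + (b / (a + b)) • q) = z
      have he : (1 - b / (a + b)) • p + (b / (a + b)) • q = (a + b)⁻¹ • z := by
        rw [← hab, smul_add, smul_smul, smul_smul]
        congr 2
        · field_simp; ring
        · field_simp
      rw [he, nproj, norm_smul, hz1, mul_one, norm_inv, Real.norm_eq_abs,
        abs_of_pos habpos, inv_inv, smul_smul, mul_inv_cancel₀ (ne_of_gt habpos), one_smul]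
    have : z ∈ sphSeg p q ∩ sphInt d K := ⟨hzseg, hzint⟩
    rw [hseg] at this
    exact this
  have hc'p : ⟪c', p⟫ ≤ 0 := by
    rw [hc', inner_sub_left, real_inner_smul_left, hup, mul_zero, sub_zero,
      real_inner_comm p c]
    exact hcS p hpS
  have hfin : 0 ≤ ⟪c', z⟫ := by
    rw [← hab, inner_add_right, real_inner_smul_right, real_inner_smul_right, hc'q]
    nlinarith
  exact absurd (hint z hzint) (not_lt.mpr hfin)

end

/-- No set of at most `d` points on a great sphere disjoint from `K` illuminates `K`;
consequently `I_{S^d}(K) ≥ d + 1`. -/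
theorem stmt0 (d : ℕ) (hd : 2 ≤ d) (K : Set (Euc (d + 1))) (hK : IsSphBody d K) :
    (∀ u ∈ uSphere d, greatSphere d u ∩ K = ∅ →
      ∀ S : Finset (Euc (d + 1)), ↑S ⊆ greatSphere d u → S.card ≤ d →
        ¬ SphIlluminates d K ↑S) ∧
    (d + 1 : ℕ∞) ≤ sphIllumNumber d K := by
  have part1 : ∀ u ∈ uSphere d, greatSphere d u ∩ K = ∅ →
      ∀ S : Finset (Euc (d + 1)), ↑S ⊆ greatSphere d u → S.card ≤ d →
        ¬ SphIlluminates d K ↑S := by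
    intro u hu hdisj S hS hcard
    have hu1 : ‖u‖ = 1 := mem_uSphere_iff'.mp hu
    obtain ⟨y₀, hy₀⟩ := hK.2.2
    have hy₀K : y₀ ∈ K := sphInt_subset' d K hy₀
    have hnz : ∀ y ∈ K, ⟪u, y⟫ ≠ 0 := by
      intro y hy h
      have hm : y ∈ greatSphere d u ∩ K := ⟨⟨hK.2.1.1 hy, h⟩, hy⟩
      rw [hdisj] at hm
      exact hm
    have hSu : ∀ p ∈ S, ⟪u, p⟫ = 0 := fun p hp => (hS hp).2
    rcases lt_or_gt_of_ne (hnz y₀ hy₀K) with hneg | hpos0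
    · have hpos : ∀ y ∈ K, 0 < ⟪-u, y⟫ := by
        intro y hy
        rw [inner_neg_left, neg_pos]
        rcases lt_or_gt_of_ne (hnz y hy) with h | h
        · exact h
        · exact (sign_lemma d K hK.2.1 u hdisj hy hy₀K h hneg).elim
      exact key_lemma d hd K hK (-u) (by rw [norm_neg]; exact hu1) hpos S
        (fun p hp => by rw [inner_neg_left, hSu p hp, neg_zero]) hcard
    · have hpos : ∀ y ∈ K, 0 < ⟪u, y⟫ := by
        intro y hy
        rcases lt_or_gt_of_ne (hnz y hy) with h | h
        · exact (sign_lemma d K hK.2.1 u hdisj hy₀K hy hpos0 h).elim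
        · exact h
      exact key_lemma d hd K hK u hu1 hpos S hSu hcard
  refine ⟨part1, ?_⟩
  apply le_sInf
  rintro n ⟨u, hu, hdisj, S, hS, hIll, rfl⟩
  have hgt : ¬ S.card ≤ d := fun h => part1 u hu hdisj S hS h hIll
  have hc : d + 1 ≤ S.card := by omega
  exact_mod_cast hc
end

section
/- Let K be a convex body in S^d and let A ⊆ S^d \ K be a finite set that illuminates K. If there exists x ∈ S^d such that A is contained in the closed hemisphere {y ∈ S^d : ⟨x,y⟩ ≥ 0} and K is contained in the open hemisphere H_x = {y ∈ S^d : ⟨x,y⟩ > 0}, then I_{S^d}(K) ≤ card(A). -/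
open RealInnerProductSpace Metric Set

noncomputable section IllumAux

lemma nproj_smul_pos {n : ℕ} {c : ℝ} (hc : 0 < c) (v : Euc n) :
    nproj (c • v) = nproj v := by
  unfold nproj
  rw [norm_smul, Real.norm_of_nonneg hc.le, smul_smul]
  congr 1
  rcases eq_or_ne v 0 with rfl | hv
  · simp
  · field_simp [norm_ne_zero_iff.2 hv]

lemma nproj_norm_one {n : ℕ} {v : Euc n} (hv : v ≠ 0) : ‖nproj v‖ = 1 := by
  unfold nproj
  rw [norm_smul, Real.norm_of_nonneg (inv_nonneg.2 (norm_nonneg v))]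
  field_simp [norm_ne_zero_iff.2 hv]

lemma nproj_eq_self {n : ℕ} {v : Euc n} (hv : ‖v‖ = 1) : nproj v = v := by
  unfold nproj; rw [hv]; simp

lemma nproj_spec {n : ℕ} (v : Euc n) : (‖v‖ : ℝ) • nproj v = v := by
  unfold nproj
  rcases eq_or_ne v 0 with rfl | hv
  · simp
  · rw [smul_smul]
    field_simp [norm_ne_zero_iff.2 hv]
    rw [one_smul]

/-- The cone over `K`. -/
def sphCone {n : ℕ} (K : Set (Euc n)) : Set (Euc n) :=
  {v | ∃ s : ℝ, 0 ≤ s ∧ ∃ y ∈ K, v = s • y}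

lemma mem_sphCone_of_mem {n : ℕ} {K : Set (Euc n)} {y : Euc n} (hy : y ∈ K) :
    y ∈ sphCone K := ⟨1, zero_le_one, y, hy, (one_smul _ _).symm⟩

lemma sphCone_smul {n : ℕ} {K : Set (Euc n)} {v : Euc n} {c : ℝ}
    (hv : v ∈ sphCone K) (hc : 0 ≤ c) : c • v ∈ sphCone K := by
  obtain ⟨s, hs, y, hy, rfl⟩ := hv
  exact ⟨c * s, mul_nonneg hc hs, y, hy, smul_smul c s y⟩

variable {d : ℕ} {K : Set (Euc (d + 1))} {x : Euc (d + 1)}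

lemma sphCone_convex (hKs : K ⊆ uSphere d)
    (hseg : ∀ p ∈ K, ∀ q ∈ K, sphSeg p q ⊆ K)
    (hKx : ∀ y ∈ K, 0 < ⟪x, y⟫) : Convex ℝ (sphCone K) := by
  intro v₁ hv₁ v₂ hv₂ a b ha hb hab
  obtain ⟨s₁, hs₁, y₁, hy₁, rfl⟩ := hv₁
  obtain ⟨s₂, hs₂, y₂, hy₂, rfl⟩ := hv₂
  set c₁ : ℝ := a * s₁ with hc₁
  set c₂ : ℝ := b * s₂ with hc₂
  have hc₁0 : 0 ≤ c₁ := mul_nonneg ha hs₁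
  have hc₂0 : 0 ≤ c₂ := mul_nonneg hb hs₂
  have hvmem : a • s₁ • y₁ + b • s₂ • y₂ = c₁ • y₁ + c₂ • y₂ := by
    rw [smul_smul, smul_smul]
  rw [hvmem]
  rcases eq_or_lt_of_le hc₁0 with hc₁z | hc₁p
  · rw [← hc₁z, zero_smul, zero_add]
    exact sphCone_smul (mem_sphCone_of_mem hy₂) hc₂0
  rcases eq_or_lt_of_le hc₂0 with hc₂z | hc₂p
  · rw [← hc₂z, zero_smul, add_zero]
    exact sphCone_smul (mem_sphCone_of_mem hy₁) hc₁0
  set c : ℝ := c₁ + c₂ with hc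
  have hcp : 0 < c := add_pos hc₁p hc₂p
  set t : ℝ := c₂ / c with ht
  have ht0 : 0 ≤ t := div_nonneg hc₂0 hcp.le
  have ht1 : t ≤ 1 := by
    rw [ht, div_le_one hcp]; linarith
  set p : Euc (d + 1) := (1 - t) • y₁ + t • y₂ with hp
  have h1t : 1 - t = c₁ / c := by
    rw [ht, eq_div_iff hcp.ne', sub_mul, div_mul_cancel₀ _ hcp.ne']; linarith
  have hxp : 0 < ⟪x, p⟫ := by
    have h₁ := hKx y₁ hy₁
    have h₂ := hKx y₂ hy₂
    rw [hp, inner_add_right, real_inner_smul_right, real_inner_smul_right, h1t, ht]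
    have : 0 < c₁ / c * ⟪x, y₁⟫ + c₂ / c * ⟪x, y₂⟫ := by positivity
    linarith
  have hpne : p ≠ 0 := by
    intro h; rw [h, inner_zero_right] at hxp; exact lt_irrefl 0 hxp
  have hmem : nproj p ∈ K := hseg y₁ hy₁ y₂ hy₂ ⟨t, ⟨ht0, ht1⟩, rfl⟩
  refine ⟨c * ‖p‖, by positivity, nproj p, hmem, ?_⟩
  have hcn : (c * ‖p‖) • nproj p = c • p := by
    rw [mul_smul, nproj_spec]
  rw [hcn, hp, smul_add, smul_smul, smul_smul, h1t, ht]
  have e1 : c * (c₁ / c) = c₁ := by field_simp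
  have e2 : c * (c₂ / c) = c₂ := by field_simp
  rw [e1, e2]

lemma sphCone_add {v₁ v₂ : Euc (d + 1)} (hconv : Convex ℝ (sphCone K))
    (h₁ : v₁ ∈ sphCone K) (h₂ : v₂ ∈ sphCone K) : v₁ + v₂ ∈ sphCone K := by
  have h := hconv h₁ h₂ (by norm_num : (0:ℝ) ≤ 1/2) (by norm_num : (0:ℝ) ≤ 1/2) (by norm_num)
  have h2 := sphCone_smul h (by norm_num : (0:ℝ) ≤ 2)
  convert h2 using 1
  rw [smul_add, smul_smul, smul_smul]
  norm_num

lemma sphCone_interior_smul {v : Euc (d + 1)} {c : ℝ} (hc : 0 < c)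
    (hv : v ∈ interior (sphCone K)) : c • v ∈ interior (sphCone K) := by
  refine mem_interior.2 ⟨(c • ·) '' interior (sphCone K), ?_, ?_, ⟨v, hv, rfl⟩⟩
  · rintro _ ⟨w, hw, rfl⟩
    exact sphCone_smul (interior_subset hw) hc.le
  · exact isOpenMap_smul₀ (G₀ := ℝ) hc.ne' _ isOpen_interior

lemma sphCone_interior_add {v₁ v₂ : Euc (d + 1)} (hconv : Convex ℝ (sphCone K))
    (h₁ : v₁ ∈ sphCone K) (h₂ : v₂ ∈ interior (sphCone K)) :
    v₁ + v₂ ∈ interior (sphCone K) := by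
  refine mem_interior.2 ⟨(v₁ + ·) '' interior (sphCone K), ?_, ?_, ⟨v₂, h₂, rfl⟩⟩
  · rintro _ ⟨w, hw, rfl⟩
    exact sphCone_add hconv h₁ (interior_subset hw)
  · exact (isOpenMap_add_left v₁) _ isOpen_interior

lemma interior_of_sphInt {z : Euc (d + 1)} (hz : z ∈ sphInt d K) :
    z ∈ interior (sphCone K) := by
  obtain ⟨hzs, U, hU, hzU, hUK⟩ := hz
  have hznorm : ‖z‖ = 1 := mem_sphere_zero_iff_norm.1 hzs
  have hzne : z ≠ 0 := by intro h; rw [h, norm_zero] at hznorm; norm_num at hznorm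
  refine mem_interior.2 ⟨{v | v ≠ 0} ∩ nproj ⁻¹' U, ?_, ?_, ?_⟩
  · rintro v ⟨hvne, hvU⟩
    have h1 : nproj v ∈ uSphere d := mem_sphere_zero_iff_norm.2 (nproj_norm_one hvne)
    have h2 : nproj v ∈ K := hUK ⟨hvU, h1⟩
    exact ⟨‖v‖, norm_nonneg v, nproj v, h2, (nproj_spec v).symm⟩
  · refine ContinuousOn.isOpen_inter_preimage ?_ ?_ hU
    · exact ContinuousOn.smul ((continuousOn_id.norm).inv₀
        (fun v hv => norm_ne_zero_iff.2 hv)) continuousOn_id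
    · exact isOpen_compl_singleton
  · exact ⟨hzne, by rw [Set.mem_preimage, nproj_eq_self hznorm]; exact hzU⟩

lemma sphInt_of_interior (hKs : K ⊆ uSphere d) {v : Euc (d + 1)}
    (hv : v ∈ interior (sphCone K)) (hvn : ‖v‖ = 1) : v ∈ sphInt d K := by
  refine ⟨mem_sphere_zero_iff_norm.2 hvn, interior (sphCone K), isOpen_interior, hv, ?_⟩
  rintro y ⟨hy, hys⟩
  obtain ⟨s, hs, k, hk, rfl⟩ := interior_subset hy
  have hkn : ‖k‖ = 1 := mem_sphere_zero_iff_norm.1 (hKs hk)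
  have hyn : ‖s • k‖ = 1 := mem_sphere_zero_iff_norm.1 hys
  rw [norm_smul, hkn, mul_one, Real.norm_of_nonneg hs] at hyn
  rw [hyn, one_smul]; exact hk

lemma sphCone_inner_pos (hxn : ‖x‖ = 1) (hKx : ∀ y ∈ K, 0 < ⟪x, y⟫)
    {v : Euc (d + 1)} (hv : v ∈ interior (sphCone K)) : 0 < ⟪x, v⟫ := by
  have hnn : ∀ w ∈ sphCone K, 0 ≤ ⟪x, w⟫ := by
    rintro w ⟨s, hs, y, hy, rfl⟩
    rw [real_inner_smul_right]
    exact mul_nonneg hs (hKx y hy).le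
  by_contra hle
  push_neg at hle
  obtain ⟨ε, hε, hball⟩ := Metric.isOpen_iff.1 isOpen_interior v hv
  have hmem : v - (ε / 2) • x ∈ sphCone K := by
    apply interior_subset; apply hball
    rw [Metric.mem_ball, dist_eq_norm]
    simp only [sub_sub_cancel_left, norm_neg, norm_smul, hxn, mul_one,
      Real.norm_of_nonneg (by positivity : (0:ℝ) ≤ ε/2)]
    linarith
  have hge := hnn _ hmem
  rw [inner_sub_right, real_inner_smul_right, real_inner_self_eq_norm_sq, hxn] at hge
  nlinarith

lemma sphInt_subset {z : Euc (d + 1)} (hz : z ∈ sphInt d K) : z ∈ K := by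
  obtain ⟨hzs, U, hU, hzU, hUK⟩ := hz
  exact hUK ⟨hzU, hzs⟩

set_option maxHeartbeats 1600000 in
/-- Main transfer lemma: the equator point associated to an illuminating point `a`
still illuminates `q`. -/
lemma illum_transfer {o a q : Euc (d + 1)}
    (hKs : K ⊆ uSphere d) (hseg : ∀ p ∈ K, ∀ q ∈ K, sphSeg p q ⊆ K)
    (hxn : ‖x‖ = 1) (hKpos : ∀ y ∈ K, 0 < ⟪x, y⟫)
    (ho : o ∈ sphInt d K) (han : ‖a‖ = 1) (haK : a ∉ K) (hα : 0 < ⟪x, a⟫)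
    (hq : q ∈ sphBd d K) (hill : SphIlluminated d K a q) :
    SphIlluminated d K (nproj (⟪x, a⟫⁻¹ • a - ⟪x, o⟫⁻¹ • o)) q := by
  have hconv : Convex ℝ (sphCone K) := sphCone_convex hKs hseg hKpos
  obtain ⟨hqa, hsegK, w, ⟨hws, hwspan⟩, hwint⟩ := hill
  have hqK : q ∈ K := hq.1
  have hqint : q ∉ sphInt d K := hq.2
  set α : ℝ := ⟪x, a⟫ with hαdef
  set β : ℝ := ⟪x, o⟫ with hβdef
  set γ : ℝ := ⟪x, q⟫ with hγdef
  have hoK : o ∈ K := sphInt_subset ho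
  have hβ : 0 < β := hKpos o hoK
  have hγ : 0 < γ := hKpos q hqK
  have hon : ‖o‖ = 1 := mem_sphere_zero_iff_norm.1 (hKs hoK)
  have hqn : ‖q‖ = 1 := mem_sphere_zero_iff_norm.1 (hKs hqK)
  have hwK : w ∈ K := sphInt_subset hwint
  have hwn : ‖w‖ = 1 := mem_sphere_zero_iff_norm.1 (hKs hwK)
  have hwI : w ∈ interior (sphCone K) := interior_of_sphInt hwint
  have hoI : o ∈ interior (sphCone K) := interior_of_sphInt ho
  set δ : ℝ := ⟪x, w⟫ with hδdef
  have hδ : 0 < δ := hKpos w hwK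
  obtain ⟨r, s, hrs⟩ := Submodule.mem_span_pair.1 hwspan
  have hδeq : δ = r * α + s * γ := by
    rw [hδdef, ← hrs, inner_add_right, real_inner_smul_right, real_inner_smul_right]
  -- the coefficient of `a` must be negative
  have hr : r < 0 := by
    by_contra hrge
    push_neg at hrge
    rcases le_or_gt 0 s with hs0 | hs0
    · -- w would lie on the segment from a to q
      have hrsum : 0 < r + s := by nlinarith
      have hveq : (1 - s / (r + s)) • a + (s / (r + s)) • q = (r + s)⁻¹ • w := by
        rw [← hrs]
        match_scalars <;> field_simp <;> ring
      have hwseg : w ∈ sphSeg a q := by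
        refine ⟨s / (r + s), ⟨div_nonneg hs0 hrsum.le, by
          rw [div_le_one hrsum]; linarith⟩, ?_⟩
        show nproj ((1 - s / (r + s)) • a + (s / (r + s)) • q) = w
        rw [hveq, nproj_smul_pos (inv_pos.2 hrsum), nproj_eq_self hwn]
      have : w ∈ sphSeg a q ∩ sphInt d K := ⟨hwseg, hwint⟩
      rw [hsegK] at this
      exact this
    · -- a would be an interior point of the cone
      have hrpos : 0 < r := by nlinarith
      have h1 : (-(s / r)) • q ∈ sphCone K :=
        sphCone_smul (mem_sphCone_of_mem hqK)
          (by have := div_neg_of_neg_of_pos hs0 hrpos; linarith)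
      have h2 : r⁻¹ • w ∈ interior (sphCone K) :=
        sphCone_interior_smul (inv_pos.2 hrpos) hwI
      have haeq : a = (-(s / r)) • q + r⁻¹ • w := by
        rw [← hrs]
        match_scalars <;> field_simp <;> ring
      have haI : a ∈ interior (sphCone K) := by
        rw [haeq]; exact sphCone_interior_add hconv h1 h2
      exact haK (sphInt_subset (sphInt_of_interior hKs haI han))
  -- set up the equator point e
  have hdiff : α⁻¹ • a - β⁻¹ • o ≠ 0 := by
    intro h
    rw [sub_eq_zero] at h
    have h2 : a = (α * β⁻¹) • o := by
      have := congrArg (α • ·) h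
      simpa [smul_smul, mul_inv_cancel₀ hα.ne', mul_comm] using this
    have h3 : (1 : ℝ) = α * β⁻¹ := by
      have := congrArg norm h2
      rw [norm_smul, hon, han, mul_one, Real.norm_of_nonneg (by positivity)] at this
      exact this
    rw [← h3, one_smul] at h2
    exact haK (h2 ▸ hoK)
  set D : Euc (d + 1) := α⁻¹ • a - β⁻¹ • o with hDdef
  set κ : ℝ := ‖D‖ with hκdef
  have hκ : 0 < κ := norm_pos_iff.2 hdiff
  set e : Euc (d + 1) := nproj D with hedef
  have heD : e = κ⁻¹ • D := rfl
  have hen : ‖e‖ = 1 := nproj_norm_one hdiff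
  have hxe : ⟪x, e⟫ = 0 := by
    rw [heD, real_inner_smul_right, hDdef, inner_sub_right, real_inner_smul_right,
      real_inner_smul_right, ← hαdef, ← hβdef, inv_mul_cancel₀ hα.ne',
      inv_mul_cancel₀ hβ.ne']
    ring
  -- the key interior point z₂ = q̃ + t₀ • (õ - ã)
  set lam : ℝ := γ⁻¹ / (2 * (1 + |s|)) with hlamdef
  have hlam : 0 < lam := by positivity
  set t₀ : ℝ := lam * α * (-r) with ht₀def
  have ht₀ : 0 < t₀ := by
    have : 0 < -r := neg_pos.2 hr
    positivity
  set ν₀ : ℝ := γ⁻¹ - lam * s with hν₀def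
  have hν₀ : 0 < ν₀ := by
    have h1 : 0 ≤ |s| := abs_nonneg s
    have hγi : 0 < γ⁻¹ := inv_pos.2 hγ
    have h2 : lam * |s| ≤ γ⁻¹ / 2 := by
      rw [hlamdef, div_mul_eq_mul_div, div_le_div_iff₀ (by positivity) two_pos]
      nlinarith
    have h3 : lam * s ≤ lam * |s| := mul_le_mul_of_nonneg_left (le_abs_self s) hlam.le
    rw [hν₀def]
    nlinarith
  set z₂ : Euc (d + 1) := γ⁻¹ • q + t₀ • (β⁻¹ • o - α⁻¹ • a) with hz₂def
  have hz₂eq : z₂ = ((t₀ * β⁻¹) • o + ν₀ • q) + lam • w := by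
    rw [hz₂def, ← hrs, ht₀def, hν₀def]
    match_scalars <;> field_simp <;> ring
  have hz₂I : z₂ ∈ interior (sphCone K) := by
    rw [hz₂eq]
    refine sphCone_interior_add hconv ?_ (sphCone_interior_smul hlam hwI)
    exact sphCone_add hconv
      (sphCone_smul (mem_sphCone_of_mem hoK) (by positivity))
      (sphCone_smul (mem_sphCone_of_mem hqK) hν₀.le)
  have hz₂x : 0 < ⟪x, z₂⟫ := sphCone_inner_pos hxn hKpos hz₂I
  have hz₂ne : z₂ ≠ 0 := by
    intro h; rw [h, inner_zero_right] at hz₂x; exact lt_irrefl 0 hz₂x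
  refine ⟨?_, ?_, ?_⟩
  · -- q ≠ -e
    intro h
    rw [h, inner_neg_right, hxe, neg_zero] at hγdef
    exact lt_irrefl 0 (hγdef ▸ hγ)
  · -- the segment from e to q misses the interior
    rw [Set.eq_empty_iff_forall_notMem]
    rintro m ⟨⟨t, ⟨ht0, ht1⟩, hmeq⟩, hmint⟩
    have hmI : m ∈ interior (sphCone K) := interior_of_sphInt hmint
    rcases eq_or_lt_of_le ht0 with htz | htpos
    · -- t = 0 : the point is e itself, which is on the equator, not in K
      have hme : m = e := by
        rw [← hmeq, ← htz]
        simp only [sub_zero, one_smul, zero_smul, add_zero]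
        exact nproj_eq_self hen
      have heK : e ∈ K := sphInt_subset (hme ▸ hmint)
      have := hKpos e heK
      rw [hxe] at this
      exact lt_irrefl 0 this
    · set v : Euc (d + 1) := (1 - t) • e + t • q with hvdef
      have hxv : ⟪x, v⟫ = t * γ := by
        rw [hvdef, inner_add_right, real_inner_smul_right, real_inner_smul_right,
          hxe, ← hγdef]
        ring
      have hvne : v ≠ 0 := by
        intro h
        rw [h, inner_zero_right] at hxv
        nlinarith
      have hvnorm : 0 < ‖v‖ := norm_pos_iff.2 hvne
      have hvI : v ∈ interior (sphCone K) := by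
        have := sphCone_interior_smul hvnorm (hmeq ▸ hmI)
        rwa [nproj_spec] at this
      set s₁ : ℝ := (1 - t) * κ⁻¹ / (t * γ) with hs₁def
      have hs₁ : 0 ≤ s₁ := by
        have h1t : 0 ≤ 1 - t := by linarith
        positivity
      have hv'eq : (t * γ)⁻¹ • v = γ⁻¹ • q + s₁ • D := by
        simp only [hvdef, heD, hs₁def]
        match_scalars <;> field_simp [hγ.ne', htpos.ne', hκ.ne', hα.ne', hβ.ne'] <;> first | ring1 | (ring_nf; tauto)
      have hv'I : γ⁻¹ • q + s₁ • D ∈ interior (sphCone K) := by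
        rw [← hv'eq]
        exact sphCone_interior_smul (by positivity) hvI
      -- combine with z₂ to conclude q̃ ∈ interior
      have hcomb : s₁ • z₂ + t₀ • (γ⁻¹ • q + s₁ • D) = (t₀ + s₁) • (γ⁻¹ • q) := by
        simp only [hz₂def, hDdef]
        match_scalars <;> ring
      have hqtI : γ⁻¹ • q ∈ interior (sphCone K) := by
        have hsum : (t₀ + s₁) • (γ⁻¹ • q) ∈ interior (sphCone K) := by
          rw [← hcomb]
          exact sphCone_interior_add hconv
            (sphCone_smul (interior_subset hz₂I) hs₁)
            (sphCone_interior_smul ht₀ hv'I)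
        have := sphCone_interior_smul (by positivity : (0:ℝ) < (t₀ + s₁)⁻¹) hsum
        rwa [smul_smul, inv_mul_cancel₀ (by positivity : (t₀ + s₁) ≠ 0), one_smul] at this
      have hqI : q ∈ interior (sphCone K) := by
        have := sphCone_interior_smul hγ hqtI
        rwa [smul_smul, mul_inv_cancel₀ hγ.ne', one_smul] at this
      exact hqint (sphInt_of_interior hKs hqI hqn)
  · -- the great circle through e and q meets the interior
    refine ⟨nproj z₂, ⟨mem_sphere_zero_iff_norm.2 (nproj_norm_one hz₂ne), ?_⟩, ?_⟩
    · refine Submodule.mem_span_pair.2 ⟨-(‖z₂‖⁻¹ * t₀ * κ), ‖z₂‖⁻¹ * γ⁻¹, ?_⟩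
      have hz₂e : z₂ = (-(t₀ * κ)) • e + γ⁻¹ • q := by
        simp only [hz₂def, heD, hDdef]
        match_scalars <;> field_simp [hγ.ne', hκ.ne', hα.ne', hβ.ne'] <;> first | ring1 | (ring_nf; tauto)
      have : nproj z₂ = ‖z₂‖⁻¹ • z₂ := rfl
      rw [this, hz₂e]
      match_scalars <;> ring
    · refine sphInt_of_interior hKs ?_ (nproj_norm_one hz₂ne)
      have : nproj z₂ = ‖z₂‖⁻¹ • z₂ := rfl
      rw [this]
      exact sphCone_interior_smul (inv_pos.2 (norm_pos_iff.2 hz₂ne)) hz₂I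

end IllumAux

/-- If a finite set `A ⊆ S^d \ K` illuminates `K` and `A` is contained in a closed
hemisphere whose open counterpart contains `K`, then `I_{S^d}(K) ≤ card A`. -/
theorem stmt5 (d : ℕ) (K : Set (Euc (d + 1))) (hK : IsSphBody d K)
    (A : Finset (Euc (d + 1))) (hA : ↑A ⊆ uSphere d \ K)
    (hIll : SphIlluminates d K ↑A)
    (x : Euc (d + 1)) (hx : x ∈ uSphere d)
    (hAx : ∀ a ∈ A, 0 ≤ ⟪x, a⟫) (hKx : K ⊆ openHemi d x) :
    sphIllumNumber d K ≤ (A.card : ℕ∞) := by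
  classical
  obtain ⟨hKcomp, hKconv, hintne⟩ := hK
  obtain ⟨hKs, -, hseg⟩ := hKconv
  obtain ⟨o, ho⟩ := hintne
  have hxn : ‖x‖ = 1 := mem_sphere_zero_iff_norm.1 hx
  have hKpos : ∀ y ∈ K, 0 < ⟪x, y⟫ := fun y hy => (hKx hy).2
  have hoK : o ∈ K := sphInt_subset ho
  have hβ : 0 < ⟪x, o⟫ := hKpos o hoK
  have hon : ‖o‖ = 1 := mem_sphere_zero_iff_norm.1 (hKs hoK)
  set f : Euc (d + 1) → Euc (d + 1) :=
    fun a => if ⟪x, a⟫ = 0 then a else nproj (⟪x, a⟫⁻¹ • a - ⟪x, o⟫⁻¹ • o) with hf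
  set S : Finset (Euc (d + 1)) := A.image f with hS
  have hdiffne : ∀ a, a ∈ A → ⟪x, a⟫ ≠ 0 → ⟪x, a⟫⁻¹ • a - ⟪x, o⟫⁻¹ • o ≠ 0 := by
    intro a haA hane h
    obtain ⟨has, haK⟩ := hA haA
    have han : ‖a‖ = 1 := mem_sphere_zero_iff_norm.1 has
    have hα : 0 < ⟪x, a⟫ := lt_of_le_of_ne (hAx a haA) (Ne.symm hane)
    rw [sub_eq_zero] at h
    have h2 : a = (⟪x, a⟫ * ⟪x, o⟫⁻¹) • o := by
      calc a = ⟪x, a⟫ • (⟪x, a⟫⁻¹ • a) := by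
              rw [smul_smul, mul_inv_cancel₀ hα.ne', one_smul]
        _ = ⟪x, a⟫ • (⟪x, o⟫⁻¹ • o) := by rw [h]
        _ = (⟪x, a⟫ * ⟪x, o⟫⁻¹) • o := smul_smul _ _ _
    have h3 : (1 : ℝ) = ⟪x, a⟫ * ⟪x, o⟫⁻¹ := by
      have h4 := congrArg norm h2
      rw [norm_smul, hon, han, mul_one, Real.norm_of_nonneg (by positivity)] at h4
      exact h4
    rw [← h3, one_smul] at h2
    exact haK (h2 ▸ hoK)
  have hSgs : ↑S ⊆ greatSphere d x := by
    intro b hb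
    rw [hS] at hb
    obtain ⟨a, haA, rfl⟩ := Finset.mem_coe.1 hb |> Finset.mem_image.1
    obtain ⟨has, haK⟩ := hA (Finset.mem_coe.2 haA)
    by_cases hane : ⟪x, a⟫ = 0
    · rw [hf]; simp only [hane, if_pos rfl]
      exact ⟨has, hane⟩
    · have hα : 0 < ⟪x, a⟫ := lt_of_le_of_ne (hAx a haA) (Ne.symm hane)
      have hne := hdiffne a haA hane
      rw [hf]; simp only [if_neg hane]
      constructor
      · exact mem_sphere_zero_iff_norm.2 (nproj_norm_one hne)
      · show ⟪x, nproj (⟪x, a⟫⁻¹ • a - ⟪x, o⟫⁻¹ • o)⟫ = 0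
        unfold nproj
        rw [real_inner_smul_right, inner_sub_right, real_inner_smul_right,
          real_inner_smul_right, inv_mul_cancel₀ hα.ne', inv_mul_cancel₀ hβ.ne']
        ring
  have hSdisj : greatSphere d x ∩ K = ∅ := by
    rw [Set.eq_empty_iff_forall_notMem]
    rintro y ⟨⟨-, hy0⟩, hyK⟩
    exact (hKpos y hyK).ne' hy0
  have hSill : SphIlluminates d K ↑S := by
    intro q hq
    obtain ⟨a, haA, hillaq⟩ := hIll q hq
    have haA' : a ∈ A := Finset.mem_coe.1 haA
    obtain ⟨has, haK⟩ := hA haA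
    have han : ‖a‖ = 1 := mem_sphere_zero_iff_norm.1 has
    refine ⟨f a, Finset.mem_coe.2 (Finset.mem_image_of_mem f haA'), ?_⟩
    by_cases hane : ⟪x, a⟫ = 0
    · rw [hf]; simp only [if_pos hane]; exact hillaq
    · have hα : 0 < ⟪x, a⟫ := lt_of_le_of_ne (hAx a haA') (Ne.symm hane)
      rw [hf]; simp only [if_neg hane]
      exact illum_transfer hKs hseg hxn hKpos ho han haK hα hq hillaq
  have hmem : (S.card : ℕ∞) ∈ {n : ℕ∞ | ∃ u ∈ uSphere d, greatSphere d u ∩ K = ∅ ∧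
      ∃ T : Finset (Euc (d + 1)), ↑T ⊆ greatSphere d u ∧ SphIlluminates d K ↑T ∧
        (T.card : ℕ∞) = n} := ⟨x, hx, hSdisj, S, hSgs, hSill, rfl⟩
  calc sphIllumNumber d K ≤ (S.card : ℕ∞) := sInf_le hmem
    _ ≤ (A.card : ℕ∞) := by exact_mod_cast Finset.card_image_le
end

section
/- Let K be a convex body in S^d. Then I_{S^d}(K) is equal to the minimum number n for which there exist a point x in the interior of the polar body K* and n open hemispheres of S^d whose boundary great spheres all pass through x, such that every exposed face of K* is contained in at least one of the n open hemispheres. -/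
open RealInnerProductSpace Metric Set

open RealInnerProductSpace Metric Set
noncomputable section
namespace Stmt12Aux

lemma mem_uSphere_iff {d : ℕ} {x : Euc (d+1)} : x ∈ uSphere d ↔ ‖x‖ = 1 := by
  simp [uSphere]

lemma nproj_of_norm_one {n : ℕ} {x : Euc n} (h : ‖x‖ = 1) : nproj x = x := by
  simp [nproj, h]

lemma norm_nproj {n : ℕ} {x : Euc n} (h : x ≠ 0) : ‖nproj x‖ = 1 := by
  simp [nproj, norm_smul, abs_of_nonneg, inv_mul_cancel₀ (norm_ne_zero_iff.mpr h)]

lemma nproj_smul {n : ℕ} {c : ℝ} (hc : 0 < c) (x : Euc n) : nproj (c • x) = nproj x := by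
  rcases eq_or_ne x 0 with rfl | hx
  · simp [nproj]
  · simp only [nproj, norm_smul, Real.norm_eq_abs, abs_of_pos hc, smul_smul,
      mul_inv]
    rw [mul_comm, ← mul_assoc, mul_inv_cancel₀ (ne_of_gt hc), one_mul]

lemma inner_nproj {n : ℕ} (y x : Euc n) : ⟪y, nproj x⟫ = ‖x‖⁻¹ * ⟪y, x⟫ := by
  rw [nproj, real_inner_smul_right]

lemma continuousAt_nproj {n : ℕ} {x : Euc n} (hx : x ≠ 0) :
    ContinuousAt (nproj (n := n)) x := by
  have : ContinuousAt (fun z : Euc n => ‖z‖⁻¹) x :=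
    (continuous_norm.continuousAt).inv₀ (norm_ne_zero_iff.mpr hx)
  exact this.smul continuousAt_id


variable {d : ℕ} {K : Set (Euc (d+1))}

lemma sphPolar_subset : sphPolar d K ⊆ uSphere d := fun x hx => hx.1

lemma sphInt_subset : sphInt d K ⊆ K := by
  rintro x ⟨hxS, U, hU, hxU, hUK⟩
  exact hUK ⟨hxU, hxS⟩

lemma isCompact_sphPolar : IsCompact (sphPolar d K) := by
  have hclosed : IsClosed (sphPolar d K) := by
    have : sphPolar d K = (Metric.sphere (0 : Euc (d+1)) 1) ∩ ⋂ y ∈ K, {x | ⟪x, y⟫ ≤ 0} := by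
      ext x
      simp only [sphPolar, uSphere, mem_setOf_eq, mem_inter_iff, mem_iInter]
    rw [this]
    exact isClosed_sphere.inter (isClosed_biInter fun y _ =>
      isClosed_le (Continuous.inner continuous_id continuous_const) continuous_const)
  exact (isCompact_sphere 0 1).of_isClosed_subset hclosed sphPolar_subset

lemma exists_perturb {n : ℕ} {U : Set (Euc n)} (hU : IsOpen U) {z : Euc n} (y : Euc n)
    (hz : z ≠ 0) (hzn : ‖z‖ = 1) (hzU : z ∈ U) :
    ∃ ε : ℝ, 0 < ε ∧ z + ε • y ≠ 0 ∧ nproj (z + ε • y) ∈ U := by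
  have hcont : ContinuousAt (fun t : ℝ => z + t • y) 0 :=
    (continuousAt_const.add (continuousAt_id.smul continuousAt_const))
  have h0 : (fun t : ℝ => z + t • y) 0 = z := by simp
  have hne : ∀ᶠ t : ℝ in nhds 0, z + t • y ≠ 0 := by
    have hm : {w : Euc n | w ≠ 0} ∈ nhds z := (isOpen_compl_singleton).mem_nhds hz
    have := hcont.eventually_mem (by simpa using hm)
    simpa using this
  have hmem : ∀ᶠ t : ℝ in nhds 0, nproj (z + t • y) ∈ U := by
    have hz0 : z + (0:ℝ) • y = z := by simp
    have hc2 : ContinuousAt (fun t : ℝ => nproj (z + t • y)) 0 := by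
      have hcn : ContinuousAt nproj ((fun t : ℝ => z + t • y) 0) := by
        simpa using Stmt12Aux.continuousAt_nproj hz
      exact ContinuousAt.comp (f := fun t : ℝ => z + t • y) hcn hcont
    apply hc2.eventually_mem
    show U ∈ nhds (nproj (z + (0:ℝ) • y))
    rw [hz0, Stmt12Aux.nproj_of_norm_one hzn]
    exact hU.mem_nhds hzU
  rcases Metric.eventually_nhds_iff.mp (hne.and hmem) with ⟨δ, hδ, hball⟩
  refine ⟨δ/2, by linarith, ?_⟩
  exact hball (y := δ/2) (by rw [Real.dist_eq, sub_zero, abs_of_pos (by linarith : (0:ℝ) < δ/2)]; linarith)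

lemma isOpen_forall_inner_lt {n : ℕ} {A : Set (Euc n)} (hA : IsCompact A)
    (hA1 : ∀ y ∈ A, ‖y‖ = 1) : IsOpen {w : Euc n | ∀ y ∈ A, ⟪y, w⟫ < 0} := by
  rw [Metric.isOpen_iff]
  intro w hw
  rcases A.eq_empty_or_nonempty with rfl | hne
  · exact ⟨1, one_pos, fun w' _ => by simp⟩
  · obtain ⟨y₀, hy₀A, hy₀max⟩ := hA.exists_isMaxOn hne
      (Continuous.continuousOn (Continuous.inner continuous_id continuous_const) :
        ContinuousOn (fun y : Euc n => ⟪y, w⟫) A)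
    refine ⟨-⟪y₀, w⟫, by simpa using hw y₀ hy₀A, fun w' hw' y hy => ?_⟩
    have h1 : ⟪y, w⟫ ≤ ⟪y₀, w⟫ := hy₀max hy
    have h2 : ⟪y, w' - w⟫ ≤ ‖y‖ * ‖w' - w‖ := real_inner_le_norm y (w' - w)
    have h3 : ‖w' - w‖ < -⟪y₀, w⟫ := by
      rw [← dist_eq_norm]; exact hw'
    have h4 : ⟪y, w'⟫ = ⟪y, w⟫ + ⟪y, w' - w⟫ := by
      rw [inner_sub_right]; ring
    rw [hA1 y hy, one_mul] at h2
    linarith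


/-- The cone over `K`. -/
def coneOf {n : ℕ} (A : Set (Euc n)) : Set (Euc n) :=
  {z | ∃ t : ℝ, 0 ≤ t ∧ ∃ k ∈ A, z = t • k}

lemma smul_add_mem_coneOf (hK : IsSphBody d K) {a b : Euc (d+1)} (ha : a ∈ K) (hb : b ∈ K)
    {s t : ℝ} (hs : 0 ≤ s) (ht : 0 ≤ t) : s • a + t • b ∈ coneOf K := by
  obtain ⟨hKS, ⟨x₀, hx₀S, hx₀⟩, harc⟩ := hK.2.1
  rcases eq_or_lt_of_le (add_nonneg hs ht) with hst | hst
  · have hs0 : s = 0 := by linarith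
    have ht0 : t = 0 := by linarith
    exact ⟨0, le_refl 0, a, ha, by simp [hs0, ht0]⟩
  · set lam := t / (s + t) with hlam
    have hlam0 : 0 ≤ lam := div_nonneg ht (le_of_lt hst)
    have hlam1 : lam ≤ 1 := by
      rw [hlam, div_le_one hst]; linarith
    set w : Euc (d+1) := (1 - lam) • a + lam • b with hw
    have hwx : 0 < ⟪x₀, w⟫ := by
      have h1 : 0 < ⟪x₀, a⟫ := (hx₀ ha).2
      have h2 : 0 < ⟪x₀, b⟫ := (hx₀ hb).2
      rw [hw, inner_add_right, real_inner_smul_right, real_inner_smul_right]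
      rcases eq_or_lt_of_le hlam1 with h | h
      · rw [h]; simpa using h2
      · have p1 := mul_pos (by linarith : (0:ℝ) < 1 - lam) h1
        have p2 := mul_nonneg hlam0 h2.le
        linarith
    have hwne : w ≠ 0 := by
      intro h; rw [h] at hwx; simp at hwx
    have hcK : nproj w ∈ K := by
      apply harc a ha b hb
      exact ⟨lam, ⟨hlam0, hlam1⟩, rfl⟩
    have hkey : s • a + t • b = ((s + t) * ‖w‖) • nproj w := by
      have h1 : ‖w‖ • nproj w = w := by
        rw [nproj, smul_smul, mul_inv_cancel₀ (norm_ne_zero_iff.mpr hwne), one_smul]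
      rw [← smul_smul, h1, hw, hlam]
      match_scalars
      · field_simp; ring
      · field_simp
    exact ⟨(s + t) * ‖w‖, mul_nonneg (le_of_lt hst) (norm_nonneg w), nproj w, hcK, hkey⟩

lemma convex_coneOf (hK : IsSphBody d K) : Convex ℝ (coneOf K) := by
  rintro z1 ⟨t1, ht1, k1, hk1, rfl⟩ z2 ⟨t2, ht2, k2, hk2, rfl⟩ α β hα hβ _
  rw [smul_smul, smul_smul]
  exact smul_add_mem_coneOf hK hk1 hk2 (mul_nonneg hα ht1) (mul_nonneg hβ ht2)

lemma isClosed_coneOf (hK : IsSphBody d K) : IsClosed (coneOf K) := by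
  have hKS := hK.2.1.1
  apply IsSeqClosed.isClosed
  intro z p hz hzp
  choose t htn k hkK hzk using hz
  have hnorm : ∀ m, t m = ‖z m‖ := by
    intro m
    have : ‖k m‖ = 1 := mem_uSphere_iff.mp (hKS (hkK m))
    rw [hzk m, norm_smul, this, mul_one, Real.norm_eq_abs, abs_of_nonneg (htn m)]
  obtain ⟨c, hcK, φ, hφ, hkc⟩ := hK.1.tendsto_subseq hkK
  have htend : Filter.Tendsto (fun m => ‖z (φ m)‖ • k (φ m)) Filter.atTop (nhds (‖p‖ • c)) := by
    apply Filter.Tendsto.smul _ hkc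
    exact (continuous_norm.tendsto p).comp (hzp.comp hφ.tendsto_atTop)
  have hteq : (fun m => ‖z (φ m)‖ • k (φ m)) = fun m => z (φ m) := by
    funext m
    rw [← hnorm (φ m), ← hzk (φ m)]
  rw [hteq] at htend
  have : p = ‖p‖ • c := tendsto_nhds_unique (hzp.comp hφ.tendsto_atTop) htend
  exact ⟨‖p‖, norm_nonneg p, c, hcK, this⟩

lemma mem_coneOf_iff (hKS : K ⊆ uSphere d) {z : Euc (d+1)} (hz : z ∈ uSphere d) :
    z ∈ coneOf K ↔ z ∈ K := by
  constructor
  · rintro ⟨t, ht, k, hk, rfl⟩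
    have hk1 : ‖k‖ = 1 := mem_uSphere_iff.mp (hKS hk)
    have hz1 : ‖t • k‖ = 1 := mem_uSphere_iff.mp hz
    rw [norm_smul, hk1, mul_one, Real.norm_eq_abs, abs_of_nonneg ht] at hz1
    rw [hz1, one_smul]
    exact hk
  · intro h; exact ⟨1, zero_le_one, z, h, (one_smul ℝ z).symm⟩

lemma separation (hK : IsSphBody d K) {z : Euc (d+1)} (hz : z ∈ uSphere d) (hzK : z ∉ K) :
    ∃ y ∈ sphPolar d K, 0 < ⟪y, z⟫ := by
  have hzC : z ∉ coneOf K := fun h => hzK ((mem_coneOf_iff hK.2.1.1 hz).mp h)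
  obtain ⟨f, u, hfu, hufz⟩ :=
    geometric_hahn_banach_closed_point (convex_coneOf hK) (isClosed_coneOf hK) hzC
  obtain ⟨a, haK⟩ : K.Nonempty := hK.2.2.imp (fun _ h => sphInt_subset h)
  have h0C : (0 : Euc (d+1)) ∈ coneOf K := ⟨0, le_refl 0, a, haK, by simp⟩
  have hu0 : 0 < u := by simpa using hfu 0 h0C
  have hfK : ∀ w ∈ K, f w ≤ 0 := by
    intro w hw
    by_contra hfw
    push_neg at hfw
    have hmem : (u / f w) • w ∈ coneOf K :=
      ⟨u / f w, le_of_lt (div_pos hu0 hfw), w, hw, rfl⟩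
    have := hfu _ hmem
    rw [map_smul, smul_eq_mul, div_mul_cancel₀ u (ne_of_gt hfw)] at this
    exact lt_irrefl u this
  set v : Euc (d+1) := (InnerProductSpace.toDual ℝ (Euc (d+1))).symm f with hv
  have hvf : ∀ w, ⟪v, w⟫ = f w := fun w => InnerProductSpace.toDual_symm_apply
  have hvz : 0 < ⟪v, z⟫ := by rw [hvf]; linarith
  have hvne : v ≠ 0 := by
    intro h; rw [h] at hvz; simp at hvz
  refine ⟨nproj v, ⟨mem_uSphere_iff.mpr (norm_nproj hvne), fun w hw => ?_⟩, ?_⟩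
  · have : ⟪nproj v, w⟫ = ‖v‖⁻¹ * ⟪v, w⟫ := by
      rw [nproj, real_inner_smul_left]
    rw [this, hvf]
    exact mul_nonpos_of_nonneg_of_nonpos (inv_nonneg.mpr (norm_nonneg v)) (hfK w hw)
  · have : ⟪nproj v, z⟫ = ‖v‖⁻¹ * ⟪v, z⟫ := by
      rw [nproj, real_inner_smul_left]
    rw [this]
    exact mul_pos (inv_pos.mpr (norm_pos_iff.mpr hvne)) hvz


/-- Characterization of the spherical interior via the polar. -/
lemma sphInt_eq (hK : IsSphBody d K) :
    sphInt d K = {z ∈ uSphere d | ∀ y ∈ sphPolar d K, ⟪y, z⟫ < 0} := by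
  ext z
  constructor
  · rintro ⟨hzS, U, hU, hzU, hUK⟩
    refine ⟨hzS, fun y hy => ?_⟩
    have hzK : z ∈ K := hUK ⟨hzU, hzS⟩
    have hle : ⟪y, z⟫ ≤ 0 := hy.2 z hzK
    rcases lt_or_eq_of_le hle with h | h
    · exact h
    · exfalso
      have hz1 : ‖z‖ = 1 := mem_uSphere_iff.mp hzS
      have hzne : z ≠ 0 := fun h0 => by rw [h0] at hz1; simp at hz1
      obtain ⟨ε, hε, hne, hmem⟩ := exists_perturb hU y hzne hz1 hzU
      have hmemK : nproj (z + ε • y) ∈ K :=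
        hUK ⟨hmem, mem_uSphere_iff.mpr (norm_nproj hne)⟩
      have := hy.2 _ hmemK
      rw [inner_nproj, inner_add_right, real_inner_smul_right, h,
        real_inner_self_eq_norm_sq, mem_uSphere_iff.mp (hy.1)] at this
      have hpos : 0 < ‖z + ε • y‖⁻¹ * (0 + ε * 1 ^ 2) := by
        have := inv_pos.mpr (norm_pos_iff.mpr hne)
        nlinarith
      linarith
  · rintro ⟨hzS, hz⟩
    refine ⟨hzS, {w | ∀ y ∈ sphPolar d K, ⟪y, w⟫ < 0},
      isOpen_forall_inner_lt isCompact_sphPolar (fun y hy => mem_uSphere_iff.mp hy.1), hz, ?_⟩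
    rintro w ⟨hwU, hwS⟩
    by_contra hwK
    obtain ⟨y, hyP, hypos⟩ := separation hK hwS hwK
    have := hwU y hyP
    linarith

/-- Characterization of the spherical interior of the polar. -/
lemma sphInt_polar_eq (hK : IsSphBody d K) :
    sphInt d (sphPolar d K) = {z ∈ uSphere d | ∀ y ∈ K, ⟪y, z⟫ < 0} := by
  have hKS := hK.2.1.1
  ext z
  constructor
  · rintro ⟨hzS, U, hU, hzU, hUP⟩
    refine ⟨hzS, fun y hy => ?_⟩
    have hzP : z ∈ sphPolar d K := hUP ⟨hzU, hzS⟩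
    have hle : ⟪y, z⟫ ≤ 0 := by
      have := hzP.2 y hy
      rwa [real_inner_comm] at this
    rcases lt_or_eq_of_le hle with h | h
    · exact h
    · exfalso
      have hz1 : ‖z‖ = 1 := mem_uSphere_iff.mp hzS
      have hzne : z ≠ 0 := fun h0 => by rw [h0] at hz1; simp at hz1
      obtain ⟨ε, hε, hne, hmem⟩ := exists_perturb hU y hzne hz1 hzU
      have hmemP : nproj (z + ε • y) ∈ sphPolar d K :=
        hUP ⟨hmem, mem_uSphere_iff.mpr (norm_nproj hne)⟩
      have := hmemP.2 y hy
      rw [real_inner_comm, inner_nproj, inner_add_right, real_inner_smul_right, h,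
        real_inner_self_eq_norm_sq, mem_uSphere_iff.mp (hKS hy)] at this
      have hpos : 0 < ‖z + ε • y‖⁻¹ * (0 + ε * 1 ^ 2) := by
        have := inv_pos.mpr (norm_pos_iff.mpr hne)
        nlinarith
      linarith
  · rintro ⟨hzS, hz⟩
    refine ⟨hzS, {w | ∀ y ∈ K, ⟪y, w⟫ < 0},
      isOpen_forall_inner_lt hK.1 (fun y hy => mem_uSphere_iff.mp (hKS hy)), hz, ?_⟩
    rintro w ⟨hwU, hwS⟩
    exact ⟨hwS, fun y hy => le_of_lt (by rw [real_inner_comm]; exact hwU y hy)⟩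

/-- Supporting hyperplane at a boundary point. -/
lemma exists_support (hK : IsSphBody d K) {q : Euc (d+1)} (hq : q ∈ sphBd d K) :
    ∃ y ∈ sphPolar d K, ⟪y, q⟫ = 0 := by
  obtain ⟨hqK, hqI⟩ := hq
  have hqS : q ∈ uSphere d := hK.2.1.1 hqK
  rw [sphInt_eq hK] at hqI
  simp only [mem_setOf_eq, not_and, not_forall] at hqI
  obtain ⟨y, hyP, hy⟩ := hqI hqS
  push_neg at hy
  exact ⟨y, hyP, le_antisymm (hyP.2 q hqK) hy⟩

/-- If `a, b ∈ K` then `⟪u,a⟫ < 0 < ⟪u,b⟫` is impossible when the great sphere of `u`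
misses `K`. -/
lemma no_sign_change (hK : IsSphBody d K) {u : Euc (d+1)}
    (hu : greatSphere d u ∩ K = ∅) {a b : Euc (d+1)} (ha : a ∈ K) (hb : b ∈ K)
    (hua : ⟪u, a⟫ < 0) (hub : 0 < ⟪u, b⟫) : False := by
  obtain ⟨hKS, ⟨x₀, hx₀S, hx₀⟩, harc⟩ := hK.2.1
  have hnz : ∀ t ∈ Icc (0:ℝ) 1, (1 - t) • a + t • b ≠ (0 : Euc (d+1)) := by
    intro t ht h0
    have h1 : 0 < ⟪x₀, a⟫ := (hx₀ ha).2
    have h2 : 0 < ⟪x₀, b⟫ := (hx₀ hb).2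
    have : ⟪x₀, (1 - t) • a + t • b⟫ = 0 := by rw [h0, inner_zero_right]
    rw [inner_add_right, real_inner_smul_right, real_inner_smul_right] at this
    rcases eq_or_lt_of_le ht.2 with h | h
    · rw [← h] at this; nlinarith
    · nlinarith [mul_pos (by linarith : (0:ℝ) < 1 - t) h1, mul_nonneg ht.1 h2.le]
  set g : ℝ → ℝ := fun t => ⟪u, nproj ((1 - t) • a + t • b)⟫ with hg
  have hcont : ContinuousOn g (Icc 0 1) := by
    intro t ht
    apply ContinuousAt.continuousWithinAt
    have hc1 : ContinuousAt (fun t : ℝ => (1 - t) • a + t • b) t := by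
      exact (((continuous_const.sub continuous_id).smul continuous_const).add
        (continuous_id.smul continuous_const)).continuousAt
    have hc2 : ContinuousAt nproj ((fun t : ℝ => (1 - t) • a + t • b) t) :=
      continuousAt_nproj (hnz t ht)
    exact (continuous_const.inner continuous_id).continuousAt.comp
      (ContinuousAt.comp (f := fun t : ℝ => (1 - t) • a + t • b) hc2 hc1)
  have hg0 : g 0 = ⟪u, a⟫ := by
    simp only [hg]
    norm_num
    rw [nproj_of_norm_one (mem_uSphere_iff.mp (hKS ha))]
  have hg1 : g 1 = ⟪u, b⟫ := by
    simp only [hg]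
    norm_num
    rw [nproj_of_norm_one (mem_uSphere_iff.mp (hKS hb))]
  have h0mem : (0:ℝ) ∈ Icc (g 0) (g 1) := by
    rw [hg0, hg1]; exact ⟨hua.le, hub.le⟩
  obtain ⟨t, ht, hgt⟩ := intermediate_value_Icc (zero_le_one) hcont h0mem
  have hcK : nproj ((1 - t) • a + t • b) ∈ K := harc a ha b hb ⟨t, ht, rfl⟩
  have : nproj ((1 - t) • a + t • b) ∈ greatSphere d u ∩ K :=
    ⟨⟨mem_uSphere_iff.mpr (norm_nproj (hnz t ht)), hgt⟩, hcK⟩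
  rw [hu] at this
  exact absurd this (notMem_empty _)


/-- A great sphere disjoint from `K` has all of `K` strictly on one side. -/
lemma const_sign (hK : IsSphBody d K) {u : Euc (d+1)}
    (hu : greatSphere d u ∩ K = ∅) :
    (∀ y ∈ K, ⟪u, y⟫ < 0) ∨ (∀ y ∈ K, 0 < ⟪u, y⟫) := by
  have hnz : ∀ y ∈ K, ⟪u, y⟫ ≠ 0 := by
    intro y hy h
    exact (Set.eq_empty_iff_forall_notMem.mp hu y) ⟨⟨hK.2.1.1 hy, h⟩, hy⟩
  obtain ⟨a, haI⟩ := hK.2.2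
  have haK : a ∈ K := sphInt_subset haI
  rcases lt_or_gt_of_ne (hnz a haK) with h | h
  · left
    intro y hy
    by_contra hy'
    push_neg at hy'
    exact no_sign_change hK hu haK hy h (lt_of_le_of_ne hy' (Ne.symm (hnz y hy)))
  · right
    intro y hy
    by_contra hy'
    push_neg at hy'
    exact no_sign_change hK hu hy haK (lt_of_le_of_ne hy' (hnz y hy)) h


lemma illum_of_cover (hK : IsSphBody d K) {x p q : Euc (d+1)}
    (hx : ∀ y ∈ K, ⟪x, y⟫ < 0) (hp : p ∈ uSphere d) (hpx : ⟪p, x⟫ = 0)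
    (hq : q ∈ sphBd d K)
    (hcov : ∀ y ∈ sphPolar d K, ⟪y, q⟫ = 0 → 0 < ⟪p, y⟫) :
    SphIlluminated d K p q := by
  have hqK : q ∈ K := hq.1
  have hxq : ⟪x, q⟫ < 0 := hx q hqK
  have hxp : ⟪x, p⟫ = 0 := by rw [real_inner_comm]; exact hpx
  obtain ⟨y₀, hy₀P, hy₀q⟩ := exists_support hK hq
  refine ⟨?_, ?_, ?_⟩
  · intro h
    rw [h, inner_neg_right, hxp, neg_zero] at hxq
    exact lt_irrefl 0 hxq
  · -- the arc from p to q avoids the interior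
    rw [Set.eq_empty_iff_forall_notMem]
    rintro z ⟨⟨t, ht, rfl⟩, hzI'⟩
    have hzI : nproj ((1 - t) • p + t • q) ∈ sphInt d K := hzI'
    clear hzI'
    have hzS : nproj ((1 - t) • p + t • q) ∈ uSphere d := ((sphInt_eq hK) ▸ hzI).1
    have hvne : (1 - t) • p + t • q ≠ 0 := by
      intro h0
      have := mem_uSphere_iff.mp hzS
      rw [h0] at this
      simp [nproj] at this
    rcases eq_or_lt_of_le ht.2 with h1 | h1
    · -- t = 1 : the point is q itself, not in the interior
      have : nproj ((1 - t) • p + t • q) = q := by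
        rw [h1]
        norm_num
        exact nproj_of_norm_one (mem_uSphere_iff.mp (hK.2.1.1 hqK))
      rw [this] at hzI
      exact hq.2 hzI
    · have hpos : 0 < ⟪y₀, (1 - t) • p + t • q⟫ := by
        rw [inner_add_right, real_inner_smul_right, real_inner_smul_right, hy₀q]
        have := hcov y₀ hy₀P hy₀q
        rw [real_inner_comm] at this
        nlinarith
      have hneg : ⟪y₀, nproj ((1 - t) • p + t • q)⟫ < 0 :=
        ((sphInt_eq hK) ▸ hzI).2 y₀ hy₀P
      rw [inner_nproj] at hneg
      have : 0 < ‖(1 - t) • p + t • q‖⁻¹ := inv_pos.mpr (norm_pos_iff.mpr hvne)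
      nlinarith
  · -- the great circle meets the interior
    obtain ⟨s, hs, hsall⟩ : ∃ s : ℝ, 0 < s ∧ ∀ y ∈ sphPolar d K, ⟪y, q - s • p⟫ < 0 := by
      by_cases hA : ({y ∈ sphPolar d K | ⟪p, y⟫ ≤ 0}).Nonempty
      · have hAc : IsCompact {y ∈ sphPolar d K | ⟪p, y⟫ ≤ 0} := by
          apply isCompact_sphPolar.of_isClosed_subset _ (fun y hy => hy.1)
          have heq : {y ∈ sphPolar d K | ⟪p, y⟫ ≤ 0} =
              sphPolar d K ∩ {y | ⟪p, y⟫ ≤ 0} := rfl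
          rw [heq]
          exact (isCompact_sphPolar.isClosed).inter
            (isClosed_le (show Continuous fun y : Euc (d+1) => ⟪p, y⟫ from
              continuous_const.inner continuous_id) continuous_const)
        obtain ⟨y₁, hy₁A, hy₁max⟩ := hAc.exists_isMaxOn hA
          ((continuous_id.inner continuous_const).continuousOn :
            ContinuousOn (fun y : Euc (d+1) => ⟪y, q⟫) _)
        have hy₁neg : ⟪y₁, q⟫ < 0 := by
          rcases lt_or_eq_of_le (hy₁A.1.2 q hqK) with h | h
          · exact h
          · exfalso
            have := hcov y₁ hy₁A.1 h
            linarith [hy₁A.2]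
        refine ⟨-⟪y₁, q⟫ / 2, by linarith, fun y hy => ?_⟩
        rw [inner_sub_right, real_inner_smul_right]
        by_cases hyA : ⟪p, y⟫ ≤ 0
        · have hmax : ⟪y, q⟫ ≤ ⟪y₁, q⟫ := hy₁max ⟨hy, hyA⟩
          have hbound : |⟪y, p⟫| ≤ 1 := by
            have h1 := abs_real_inner_le_norm y p
            rw [mem_uSphere_iff.mp hy.1, mem_uSphere_iff.mp hp] at h1
            simpa using h1
          have hs0 : (0:ℝ) ≤ -⟪y₁, q⟫ / 2 := by linarith
          have hm1 := mul_le_mul_of_nonneg_left (neg_le_abs ⟪y, p⟫) hs0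
          have hm2 := mul_le_mul_of_nonneg_left hbound hs0
          nlinarith
        · push_neg at hyA
          have h1 : ⟪y, q⟫ ≤ 0 := hy.2 q hqK
          have h2 : 0 < (-⟪y₁, q⟫ / 2) * ⟪p, y⟫ := mul_pos (by linarith) hyA
          rw [real_inner_comm y p] at h2
          linarith
      · refine ⟨1, one_pos, fun y hy => ?_⟩
        rw [Set.not_nonempty_iff_eq_empty, Set.eq_empty_iff_forall_notMem] at hA
        have hyA := hA y
        simp only [mem_setOf_eq, not_and] at hyA
        have hpy : 0 < ⟪p, y⟫ := lt_of_not_ge (hyA hy)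
        have h1 : ⟪y, q⟫ ≤ 0 := hy.2 q hqK
        rw [real_inner_comm] at hpy
        rw [inner_sub_right, real_inner_smul_right]
        nlinarith
    have hvne : q - s • p ≠ 0 := by
      intro h0
      have h1 : ⟪x, q - s • p⟫ = 0 := by rw [h0, inner_zero_right]
      rw [inner_sub_right, real_inner_smul_right, hxp, mul_zero, sub_zero] at h1
      linarith
    refine ⟨nproj (q - s • p), ⟨⟨mem_uSphere_iff.mpr (norm_nproj hvne), ?_⟩, ?_⟩⟩
    · have hsp : q - s • p ∈ Submodule.span ℝ ({p, q} : Set (Euc (d+1))) := by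
        rw [Submodule.mem_span_pair]
        exact ⟨-s, 1, by module⟩
      exact Submodule.smul_mem _ _ hsp
    · rw [sphInt_eq hK]
      refine ⟨mem_uSphere_iff.mpr (norm_nproj hvne), fun y hy => ?_⟩
      rw [inner_nproj]
      exact mul_neg_of_pos_of_neg (inv_pos.mpr (norm_pos_iff.mpr hvne)) (hsall y hy)
  

lemma cover_of_illum (hK : IsSphBody d K) {x p q : Euc (d+1)}
    (hx : ∀ y ∈ K, ⟪x, y⟫ < 0) (hpx : ⟪p, x⟫ = 0) (hq : q ∈ sphBd d K)
    (hill : SphIlluminated d K p q) :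
    ∀ y ∈ sphPolar d K, ⟪y, q⟫ = 0 → 0 < ⟪p, y⟫ := by
  intro y hy hyq
  obtain ⟨hnp, hseg, z, hzG, hzI⟩ := hill
  have hxp : ⟪x, p⟫ = 0 := by rw [real_inner_comm]; exact hpx
  have hzK : z ∈ K := sphInt_subset hzI
  have hz1 : ‖z‖ = 1 := mem_uSphere_iff.mp (hK.2.1.1 hzK)
  obtain ⟨α, β, hαβ⟩ := Submodule.mem_span_pair.mp hzG.2
  have hβ : 0 < β := by
    have hxz : ⟪x, z⟫ < 0 := hx z hzK
    have hxq : ⟪x, q⟫ < 0 := hx q hq.1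
    rw [← hαβ, inner_add_right, real_inner_smul_right, real_inner_smul_right, hxp,
      mul_zero, zero_add] at hxz
    nlinarith
  have hyz : ⟪y, z⟫ < 0 := ((sphInt_eq hK) ▸ hzI).2 y hy
  have hαyp : α * ⟪y, p⟫ < 0 := by
    rw [← hαβ, inner_add_right, real_inner_smul_right, real_inner_smul_right, hyq,
      mul_zero, add_zero] at hyz
    exact hyz
  by_contra hyp
  push_neg at hyp
  rw [real_inner_comm] at hyp
  -- then ⟪y,p⟫ < 0 and α > 0, so z lies on the arc from p to q
  have hyplt : ⟪y, p⟫ < 0 := by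
    rcases lt_or_eq_of_le hyp with h | h
    · exact h
    · exfalso; rw [h, mul_zero] at hαyp; exact lt_irrefl 0 hαyp
  have hα : 0 < α := by nlinarith
  have hzseg : z ∈ sphSeg p q := by
    refine ⟨β / (α + β), ⟨div_nonneg hβ.le (by linarith), by
      rw [div_le_one (by linarith)]; linarith⟩, ?_⟩
    show nproj ((1 - β / (α + β)) • p + (β / (α + β)) • q) = z
    have hcomb : (1 - β / (α + β)) • p + (β / (α + β)) • q
        = ((α + β)⁻¹) • (α • p + β • q) := by
      match_scalars
      · field_simp; ring
      · field_simp
    rw [hcomb, hαβ, nproj_smul (inv_pos.mpr (by linarith : (0:ℝ) < α + β)) z,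
      nproj_of_norm_one hz1]
  have : z ∈ sphSeg p q ∩ sphInt d K := ⟨hzseg, hzI⟩
  rw [hseg] at this
  exact absurd this (notMem_empty z)

end Stmt12Aux



/-- `I_{S^d}(K)` equals the minimum number of open hemispheres whose boundary great
spheres all pass through a common interior point of `K*` and which together cover every
exposed face of `K*`. -/
theorem stmt12 (d : ℕ) (K : Set (Euc (d + 1))) (hK : IsSphBody d K) :
    sphIllumNumber d K = sInf {m : ℕ∞ | ∃ x ∈ sphInt d (sphPolar d K),
      ∃ s : Finset (Euc (d + 1)), ↑s ⊆ uSphere d ∧ (∀ p ∈ s, ⟪p, x⟫ = 0) ∧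
        (∀ F, IsSphExposedFace d (sphPolar d K) F → ∃ p ∈ s, F ⊆ openHemi d p) ∧
        (s.card : ℕ∞) = m} := by
  have hKS : K ⊆ uSphere d := hK.2.1.1
  unfold sphIllumNumber
  apply congrArg sInf
  ext n
  simp only [Set.mem_setOf_eq]
  constructor
  · rintro ⟨u, huS, hdisj, S, hSsub, hIll, hcard⟩
    obtain ⟨x, hxS, hx, hxperp⟩ :
        ∃ x, x ∈ uSphere d ∧ (∀ y ∈ K, ⟪x, y⟫ < 0) ∧ ∀ p ∈ S, ⟪p, x⟫ = 0 := by
      have hperp : ∀ p ∈ S, ⟪p, u⟫ = 0 := fun p hp => by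
        rw [real_inner_comm]; exact (hSsub hp).2
      rcases Stmt12Aux.const_sign hK hdisj with h | h
      · exact ⟨u, huS, h, hperp⟩
      · refine ⟨-u, Stmt12Aux.mem_uSphere_iff.mpr
          (by rw [norm_neg]; exact Stmt12Aux.mem_uSphere_iff.mp huS), fun y hy => ?_,
          fun p hp => ?_⟩
        · rw [inner_neg_left]; linarith [h y hy]
        · rw [inner_neg_right, hperp p hp, neg_zero]
    refine ⟨x, ?_, S, fun p hp => (hSsub hp).1, hxperp, ?_, hcard⟩
    · rw [Stmt12Aux.sphInt_polar_eq hK]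
      exact ⟨hxS, fun y hy => by rw [real_inner_comm]; exact hx y hy⟩
    · intro F hF
      obtain ⟨hFne, w, hwS, hwsupp, hFeq⟩ := hF
      have hwK : w ∈ K := by
        by_contra h
        obtain ⟨y, hyP, hypos⟩ := Stmt12Aux.separation hK hwS h
        have := hwsupp y hyP
        rw [real_inner_comm] at hypos
        linarith
      have hwBd : w ∈ sphBd d K := by
        refine ⟨hwK, fun hint => ?_⟩
        obtain ⟨y₀, hy₀F⟩ := hFne
        rw [hFeq] at hy₀F
        have h1 : ⟪y₀, w⟫ < 0 := ((Stmt12Aux.sphInt_eq hK) ▸ hint).2 y₀ hy₀F.1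
        rw [real_inner_comm] at h1
        rw [hy₀F.2] at h1
        exact lt_irrefl 0 h1
      obtain ⟨p, hpS, hillp⟩ := hIll w hwBd
      have hcov := Stmt12Aux.cover_of_illum hK hx (hxperp p hpS) hwBd hillp
      refine ⟨p, hpS, fun y hyF => ?_⟩
      rw [hFeq] at hyF
      exact ⟨Stmt12Aux.sphPolar_subset hyF.1,
        hcov y hyF.1 (by rw [real_inner_comm]; exact hyF.2)⟩
  · rintro ⟨x, hxI, s, hsub, hperp, hcov, hcard⟩
    rw [Stmt12Aux.sphInt_polar_eq hK] at hxI
    have hxS : x ∈ uSphere d := hxI.1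
    have hx : ∀ y ∈ K, ⟪x, y⟫ < 0 := fun y hy => by
      rw [real_inner_comm]; exact hxI.2 y hy
    refine ⟨x, hxS, ?_, s, fun p hp => ⟨hsub hp, by
      rw [real_inner_comm]; exact hperp p hp⟩, ?_, hcard⟩
    · rw [Set.eq_empty_iff_forall_notMem]
      rintro y ⟨⟨_, hyx⟩, hyK⟩
      have := hx y hyK
      rw [hyx] at this
      exact lt_irrefl 0 this
    · intro q hqBd
      obtain ⟨y₀, hy₀P, hy₀q⟩ := Stmt12Aux.exists_support hK hqBd
      have hFexp : IsSphExposedFace d (sphPolar d K) {y ∈ sphPolar d K | ⟪q, y⟫ = 0} := by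
        refine ⟨⟨y₀, hy₀P, by rw [real_inner_comm]; exact hy₀q⟩, q, hKS hqBd.1,
          fun y hy => ?_, rfl⟩
        rw [real_inner_comm]
        exact hy.2 q hqBd.1
      obtain ⟨p, hps, hFsub⟩ := hcov _ hFexp
      refine ⟨p, hps, Stmt12Aux.illum_of_cover hK hx (hsub hps) (hperp p hps) hqBd ?_⟩
      intro y hy hyq
      exact (hFsub ⟨hy, by rw [real_inner_comm]; exact hyq⟩).2
end
end

section
/- Let d > 2 and let P be a convex polytope in ℝ^d with nonempty interior. Then there exist a point x in the interior of P and d+1 open halfspaces of ℝ^d whose boundary hyperplanes all contain x, such that every proper face of P is contained in at least one of the d+1 open halfspaces. -/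
open RealInnerProductSpace Metric Set

section Aux

/-- Any convex combination with positive weights whose center of mass lies in a face
has all its points in the face. -/
private lemma face_gens {d : ℕ} {P F : Set (Euc d)} (hP : Convex ℝ P) (hF : IsFace P F) :
    ∀ (N : ℕ) (u : Finset (Euc d)), u.card ≤ N → (↑u : Set (Euc d)) ⊆ P →
      ∀ w : Euc d → ℝ, (∀ b ∈ u, 0 < w b) → ∑ b ∈ u, w b = 1 →
      u.centerMass w id ∈ F → (↑u : Set (Euc d)) ⊆ F := by
  classical
  intro N
  induction N with
  | zero =>
    intro u hu _ _ _ _ _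
    have : u = ∅ := Finset.card_eq_zero.mp (Nat.le_zero.mp hu)
    simp [this]
  | succ N ihN =>
    intro u hcard hsub w hw hsum hmem
    rcases u.eq_empty_or_nonempty with rfl | ⟨a, ha⟩
    · simp
    by_cases hone : u = {a}
    · have hwa : w a ≠ 0 := by
        have h1 : ∑ b ∈ u, w b = w a := by rw [hone, Finset.sum_singleton]
        intro h0; rw [h1, h0] at hsum; exact one_ne_zero hsum.symm
      have hcm : u.centerMass w id = a := by
        rw [hone, Finset.centerMass_singleton _ _ hwa]; rfl
      rw [hone]
      intro b hb
      have hb' : b = a := by simpa using hb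
      subst hb'
      rw [← hcm]; exact hmem
    · -- u has at least two elements
      have hnt : u.Nontrivial := (Finset.nontrivial_iff_ne_singleton ha).mpr hone
      have hu' : (u.erase a).Nonempty := hnt.erase_nonempty
      set u' := u.erase a with hu'def
      have hsub' : (↑u' : Set (Euc d)) ⊆ P := fun b hb =>
        hsub (Finset.mem_coe.mpr (Finset.mem_of_mem_erase (Finset.mem_coe.mp hb)))
      have hw' : ∀ b ∈ u', 0 < w b := fun b hb => hw b (Finset.mem_of_mem_erase hb)
      have hs' : 0 < ∑ b ∈ u', w b := Finset.sum_pos hw' hu'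
      have hwa : 0 < w a := hw a ha
      have hsum' : w a + ∑ b ∈ u', w b = 1 := by
        rw [hu'def, Finset.add_sum_erase _ _ ha]; exact hsum
      have hwa1 : w a < 1 := by linarith
      set y' := u'.centerMass w id with hy'
      have hy'P : y' ∈ P := by
        have : y' ∈ convexHull ℝ (↑u' : Set (Euc d)) :=
          Finset.centerMass_mem_convexHull _ (fun b hb => (hw' b hb).le) hs'
            (fun b hb => Finset.mem_coe.mpr hb)
        exact convexHull_min hsub' hP this
      have hdecomp : u.centerMass w id = w a • a + (∑ b ∈ u', w b) • y' := by
        have hins : u = insert a u' := by rw [hu'def, Finset.insert_erase ha]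
        rw [hins, Finset.centerMass_insert _ _ _ (Finset.notMem_erase a u) hs'.ne']
        have h1 : w a + ∑ b ∈ u', w b = 1 := hsum'
        rw [h1]
        simp
        rfl
      have hopen : u.centerMass w id ∈ openSegment ℝ a y' :=
        ⟨w a, ∑ b ∈ u', w b, hwa, hs', hsum', hdecomp.symm⟩
      have hseg : segment ℝ a y' ⊆ F :=
        hF.2.2 a (hsub (Finset.mem_coe.mpr ha)) y' hy'P ⟨_, hopen, hmem⟩
      have haF : a ∈ F := hseg (left_mem_segment ℝ a y')
      have hy'F : y' ∈ F := hseg (right_mem_segment ℝ a y')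
      have hcard' : u'.card ≤ N := by
        have h1 : u'.card = u.card - 1 := by rw [hu'def]; exact Finset.card_erase_of_mem ha
        have h2 : 0 < u.card := Finset.card_pos.mpr ⟨a, ha⟩
        omega
      have hsum'' : ∑ b ∈ u', w b = ∑ b ∈ u', (fun b => w b / ∑ c ∈ u', w c) b * (∑ c ∈ u', w c) := by
        field_simp
      have hw2 : ∀ b ∈ u', 0 < w b / ∑ c ∈ u', w c := fun b hb => div_pos (hw' b hb) hs'
      have hsum2 : ∑ b ∈ u', w b / ∑ c ∈ u', w c = 1 := by
        rw [← Finset.sum_div]; field_simp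
      have hcm2 : u'.centerMass (fun b => w b / ∑ c ∈ u', w c) id = y' := by
        rw [hy', Finset.centerMass]
        rw [Finset.centerMass, hsum2]
        have : ∑ b ∈ u', (w b / ∑ c ∈ u', w c) • (id b : Euc d)
            = (∑ c ∈ u', w c)⁻¹ • ∑ b ∈ u', w b • (id b : Euc d) := by
          rw [Finset.smul_sum]
          refine Finset.sum_congr rfl (fun b _ => ?_)
          rw [smul_smul, div_eq_inv_mul]
        rw [this]; simp
      have hrec := ihN u' hcard' hsub' _ hw2 hsum2 (by rw [hcm2]; exact hy'F)
      intro b hb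
      have hb' : b ∈ u := Finset.mem_coe.mp hb
      by_cases hba : b = a
      · exact hba ▸ haF
      · exact hrec (Finset.mem_coe.mpr (Finset.mem_erase.mpr ⟨hba, hb'⟩))

/-- Every point of a face of `convexHull t` is a convex combination of points of `t`
lying in the face. -/
private lemma face_carrier {d : ℕ} {t : Finset (Euc d)} {F : Set (Euc d)}
    (hF : IsFace (convexHull ℝ (↑t : Set (Euc d))) F) {y : Euc d} (hy : y ∈ F) :
    y ∈ convexHull ℝ ((↑t : Set (Euc d)) ∩ F) := by
  classical
  have hyP := hF.1 hy
  rw [Finset.convexHull_eq] at hyP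
  obtain ⟨w, hw0, hw1, hwc⟩ := hyP
  set u := t.filter (fun b => w b ≠ 0) with hu
  have hcm : u.centerMass w id = y := by
    rw [hu]
    rw [show (t.filter fun b => w b ≠ 0) = {i ∈ t | w i ≠ 0} from rfl]
    rw [Finset.centerMass_filter_ne_zero]; exact hwc
  have hsum : ∑ b ∈ u, w b = 1 := by
    rw [hu, Finset.sum_filter_ne_zero]; exact hw1
  have hwpos : ∀ b ∈ u, 0 < w b := by
    intro b hb
    have h1 := Finset.mem_filter.mp hb
    exact lt_of_le_of_ne (hw0 b h1.1) (Ne.symm h1.2)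
  have husub : (↑u : Set (Euc d)) ⊆ convexHull ℝ (↑t : Set (Euc d)) := by
    intro b hb
    exact subset_convexHull ℝ _ (Finset.mem_coe.mpr (Finset.mem_of_mem_filter b (Finset.mem_coe.mp hb)))
  have huF : (↑u : Set (Euc d)) ⊆ F :=
    face_gens (convex_convexHull ℝ _) hF u.card u le_rfl husub w hwpos hsum (hcm ▸ hy)
  rw [← hcm]
  exact Finset.centerMass_mem_convexHull _ (fun b hb => (hwpos b hb).le)
    (by rw [hsum]; norm_num)
    (fun b hb => ⟨Finset.mem_coe.mpr (Finset.mem_of_mem_filter b hb), huF (Finset.mem_coe.mpr hb)⟩)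

private lemma hull_inner_bound {d : ℕ} {A : Set (Euc d)} {v x : Euc d} {c : ℝ}
    (h : ∀ b ∈ A, c ≤ ⟪v, b - x⟫) : ∀ y ∈ convexHull ℝ A, c ≤ ⟪v, y - x⟫ := by
  have hlin : IsLinearMap ℝ (fun z : Euc d => ⟪v, z⟫) :=
    ⟨fun a b => inner_add_right v a b, fun r z => real_inner_smul_right v z r⟩
  have hconv : Convex ℝ {z : Euc d | c + ⟪v, x⟫ ≤ ⟪v, z⟫} := convex_halfSpace_ge hlin _
  have hsub : A ⊆ {z : Euc d | c + ⟪v, x⟫ ≤ ⟪v, z⟫} := by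
    intro b hb
    have := h b hb
    rw [inner_sub_right] at this
    simp only [Set.mem_setOf_eq]; linarith
  intro y hy
  have := convexHull_min hsub hconv hy
  rw [Set.mem_setOf_eq] at this
  rw [inner_sub_right]; linarith

private lemma key_single {d k : ℕ} {t : Finset (Euc d)} {p : Euc d}
    (hp : (↑t : Set (Euc d)) = {p}) :
    ∃ x ∈ convexHull ℝ (↑t : Set (Euc d)), ∃ v : Fin (k + 1) → Euc d,
      ∀ F, IsFace (convexHull ℝ (↑t : Set (Euc d))) F → F ≠ convexHull ℝ (↑t : Set (Euc d)) →
        ∃ i, ∀ y ∈ F, 0 < ⟪v i, y - x⟫ := by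
  rw [hp, convexHull_singleton]
  refine ⟨p, rfl, fun _ => 0, ?_⟩
  intro F hF hne
  have hFe : F = ∅ := by
    rcases Set.subset_singleton_iff_eq.mp hF.1 with h | h
    · exact h
    · exact absurd h hne
  exact ⟨0, by simp [hFe]⟩

set_option maxHeartbeats 1000000 in
private lemma key (d : ℕ) : ∀ (k : ℕ) (t : Finset (Euc d)), t.Nonempty →
    Module.finrank ℝ (vectorSpan ℝ (↑t : Set (Euc d))) ≤ k →
    ∃ x ∈ convexHull ℝ (↑t : Set (Euc d)), ∃ v : Fin (k + 1) → Euc d,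
      ∀ F, IsFace (convexHull ℝ (↑t : Set (Euc d))) F → F ≠ convexHull ℝ (↑t : Set (Euc d)) →
        ∃ i, ∀ y ∈ F, 0 < ⟪v i, y - x⟫ := by
  intro k
  induction k with
  | zero =>
    intro t ht hrank
    obtain ⟨p, hpt⟩ := ht
    apply key_single (p := p)
    have hbot : vectorSpan ℝ (↑t : Set (Euc d)) = ⊥ := by
      have := Nat.le_zero.mp hrank
      exact Submodule.finrank_eq_zero.mp this
    ext a
    simp only [Set.mem_singleton_iff, Finset.mem_coe]
    constructor
    · intro hat
      have hmem : a -ᵥ p ∈ vectorSpan ℝ (↑t : Set (Euc d)) :=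
        vsub_mem_vectorSpan ℝ (Finset.mem_coe.mpr hat) (Finset.mem_coe.mpr hpt)
      rw [hbot, Submodule.mem_bot] at hmem
      have h0 : a - p = 0 := hmem
      exact sub_eq_zero.mp h0
    · intro h; exact h ▸ hpt
  | succ k ih =>
    intro t ht hrank
    classical
    by_cases hsing : ∃ p : Euc d, (↑t : Set (Euc d)) = {p}
    · obtain ⟨p, hp⟩ := hsing; exact key_single hp
    -- choose an exposed point p (of maximal norm)
    obtain ⟨p, hpt, hpmax⟩ := t.exists_max_image (fun a => ‖a‖) ht
    have hstrict : ∀ a ∈ t, a ≠ p → ⟪p, a⟫ < ⟪p, p⟫ := by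
      intro a hat hap
      have h1 : ‖a‖ ≤ ‖p‖ := hpmax a hat
      have h2 : (0:ℝ) < ‖a - p‖ ^ 2 := by
        have hne : a - p ≠ 0 := sub_ne_zero.mpr hap
        have := norm_pos_iff.mpr hne
        positivity
      have h3 : ‖a - p‖ ^ 2 = ‖a‖ ^ 2 - 2 * ⟪a, p⟫ + ‖p‖ ^ 2 := norm_sub_sq_real a p
      have h4 : ⟪p, p⟫ = ‖p‖ ^ 2 := real_inner_self_eq_norm_sq p
      have h5 : ⟪p, a⟫ = ⟪a, p⟫ := real_inner_comm a p
      nlinarith [norm_nonneg a, norm_nonneg p]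
    set te := t.erase p with hte
    have hte_ne : te.Nonempty := by
      obtain ⟨q, hq, hqp⟩ : ∃ q ∈ t, q ≠ p := by
        by_contra hcon; push_neg at hcon
        exact hsing ⟨p, by
          ext a
          simp only [Set.mem_singleton_iff, Finset.mem_coe]
          exact ⟨fun h => hcon a h, fun h => h ▸ hpt⟩⟩
      exact ⟨q, Finset.mem_erase.mpr ⟨hqp, hq⟩⟩
    set r : Euc d → ℝ := fun a => ⟪p, p⟫ - ⟪p, a⟫ with hrdef
    have hr : ∀ a ∈ te, 0 < r a := by
      intro a haa
      have := hstrict a (Finset.mem_of_mem_erase haa) (Finset.ne_of_mem_erase haa)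
      simp only [hrdef]; linarith
    set n : Euc d := -p with hn
    have hnr : ∀ a : Euc d, ⟪n, a - p⟫ = r a := by
      intro a
      simp only [hn, hrdef, inner_neg_left, inner_sub_right]
      ring
    set φ : Euc d → Euc d := fun a => (r a)⁻¹ • (a - p) with hφ
    set t' := te.image φ with ht'
    have ht'_ne : t'.Nonempty := hte_ne.image φ
    have hφ1 : ∀ a ∈ te, ⟪n, φ a⟫ = 1 := by
      intro a ha
      simp only [hφ, real_inner_smul_right]
      rw [hnr a]
      field_simp [(hr a ha).ne']
    have hn1 : ∀ z ∈ t', ⟪n, z⟫ = 1 := by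
      intro z hz
      obtain ⟨a, ha, rfl⟩ := Finset.mem_image.mp hz
      exact hφ1 a ha
    have hlin_n : IsLinearMap ℝ (fun z : Euc d => ⟪n, z⟫) :=
      ⟨fun a b => inner_add_right n a b, fun c z => real_inner_smul_right n z c⟩
    have hull_n1 : ∀ z ∈ convexHull ℝ (↑t' : Set (Euc d)), ⟪n, z⟫ = 1 := by
      intro z hz
      exact convexHull_min (fun z hz => hn1 z (Finset.mem_coe.mp hz))
        (convex_hyperplane hlin_n 1) hz
    -- rank of the vertex figure
    have hrank' : Module.finrank ℝ (vectorSpan ℝ (↑t' : Set (Euc d))) ≤ k := by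
      set f : Euc d →ₗ[ℝ] ℝ :=
        { toFun := fun z => ⟪n, z⟫
          map_add' := fun a b => inner_add_right n a b
          map_smul' := fun c z => real_inner_smul_right n z c } with hf
      set W := vectorSpan ℝ (↑t : Set (Euc d)) with hW
      set U := W ⊓ LinearMap.ker f with hU
      have hWle : vectorSpan ℝ (↑t' : Set (Euc d)) ≤ U := by
        rw [vectorSpan_def, Submodule.span_le]
        rintro z ⟨z₁, hz₁, z₂, hz₂, rfl⟩
        obtain ⟨a, ha, rfl⟩ := Finset.mem_image.mp (Finset.mem_coe.mp hz₁)
        obtain ⟨b, hb, rfl⟩ := Finset.mem_image.mp (Finset.mem_coe.mp hz₂)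
        have hmemW : ∀ c ∈ te, φ c ∈ W := by
          intro c hc
          have h1 : c - p ∈ W :=
            vsub_mem_vectorSpan ℝ (Finset.mem_coe.mpr (Finset.mem_of_mem_erase hc))
              (Finset.mem_coe.mpr hpt)
          exact Submodule.smul_mem _ _ h1
        constructor
        · exact Submodule.sub_mem _ (hmemW a ha) (hmemW b hb)
        · have : f (φ a - φ b) = 0 := by
            have h1 : f (φ a) = 1 := hφ1 a ha
            have h2 : f (φ b) = 1 := hφ1 b hb
            rw [map_sub, h1, h2, sub_self]
          exact LinearMap.mem_ker.mpr this
      have hUlt : U < W := by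
        rw [lt_iff_le_and_ne]
        refine ⟨inf_le_left, ?_⟩
        intro heq
        obtain ⟨a, ha⟩ := hte_ne
        have h1 : a - p ∈ W :=
          vsub_mem_vectorSpan ℝ (Finset.mem_coe.mpr (Finset.mem_of_mem_erase ha))
            (Finset.mem_coe.mpr hpt)
        rw [← heq] at h1
        have h2 : f (a - p) = 0 := LinearMap.mem_ker.mp h1.2
        have h3 : f (a - p) = r a := hnr a
        rw [h3] at h2
        exact (hr a ha).ne' h2
      have hlt : Module.finrank ℝ (vectorSpan ℝ (↑t' : Set (Euc d))) < k + 1 :=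
        calc Module.finrank ℝ (vectorSpan ℝ (↑t' : Set (Euc d)))
            ≤ Module.finrank ℝ U := Submodule.finrank_mono hWle
          _ < Module.finrank ℝ W := Submodule.finrank_lt_finrank_of_lt hUlt
          _ ≤ k + 1 := hrank
      omega
    -- induction hypothesis on the vertex figure
    obtain ⟨x', hx', v', hv'⟩ := ih t' ht'_ne hrank'
    have hx'1 : ⟪n, x'⟫ = 1 := hull_n1 x' hx'
    -- constants
    set κ : ℝ := te.inf' hte_ne r with hκ
    have hκpos : 0 < κ := (Finset.lt_inf'_iff hte_ne).mpr hr
    have hκle : ∀ a ∈ te, κ ≤ r a := fun a ha => Finset.inf'_le r ha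
    set M : ℝ := ⟪p, p⟫ with hM
    set μ : ℝ := te.sup' hte_ne (fun a => ⟪p, a⟫) with hμ
    have hμM : μ < M := (Finset.sup'_lt_iff hte_ne).mpr
      (fun a ha => hstrict a (Finset.mem_of_mem_erase ha) (Finset.ne_of_mem_erase ha))
    set ε₁ : ℝ := (M - μ) / (2 * (1 + |⟪p, x'⟫|)) with hε₁def
    have hε₁ : 0 < ε₁ := div_pos (by linarith) (by positivity)
    set ε : ℝ := min κ ε₁ with hε
    have hεpos : 0 < ε := lt_min hκpos hε₁
    have hεκ : ε ≤ κ := min_le_left _ _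
    have hεε₁ : ε ≤ ε₁ := min_le_right _ _
    -- convex combination helper
    have hcomb : ∀ (S : Set (Euc d)), Convex ℝ S → ∀ q₁ ∈ S, ∀ q₂ ∈ S,
        ∀ ρ : ℝ, 0 ≤ ρ → ρ ≤ 1 → q₁ + ρ • (q₂ - q₁) ∈ S := by
      intro S hS q₁ h₁ q₂ h₂ ρ h0 h1'
      have hm := hS h₁ h₂ (by linarith : (0:ℝ) ≤ 1 - ρ) h0 (by ring)
      convert hm using 1
      module
    -- the map z ↦ p + κ • z sends hull t' into hull t and (later) hull B into F
    have hmapgen : ∀ a ∈ te, ∀ ρ : ℝ, 0 ≤ ρ → ρ ≤ κ → p + ρ • φ a ∈ convexHull ℝ (↑t : Set (Euc d)) := by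
      intro a ha ρ h0 h1'
      have hp' : p ∈ convexHull ℝ (↑t : Set (Euc d)) := subset_convexHull ℝ _ (Finset.mem_coe.mpr hpt)
      have ha' : (a : Euc d) ∈ convexHull ℝ (↑t : Set (Euc d)) :=
        subset_convexHull ℝ _ (Finset.mem_coe.mpr (Finset.mem_of_mem_erase ha))
      have heq : p + ρ • φ a = p + (ρ * (r a)⁻¹) • (a - p) := by
        simp only [hφ, smul_smul]
      rw [heq]
      refine hcomb _ (convex_convexHull ℝ _) p hp' a ha' _ ?_ ?_
      · have := (hr a ha).le
        positivity
      · rw [← div_eq_mul_inv, div_le_one (hr a ha)]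
        exact h1'.trans (hκle a ha)
    have hgt' : ∀ z ∈ convexHull ℝ (↑t' : Set (Euc d)),
        p + κ • z ∈ convexHull ℝ (↑t : Set (Euc d)) := by
      have hconvS : Convex ℝ {z : Euc d | p + κ • z ∈ convexHull ℝ (↑t : Set (Euc d))} := by
        intro z₁ h₁ z₂ h₂ a b ha hb hab
        simp only [Set.mem_setOf_eq] at h₁ h₂ ⊢
        have heq : p + κ • (a • z₁ + b • z₂) = a • (p + κ • z₁) + b • (p + κ • z₂) := by
          have h' : a • (p + κ • z₁) + b • (p + κ • z₂) = (a + b) • p + κ • (a • z₁ + b • z₂) := by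
            module
          rw [h', hab, one_smul]
        rw [heq]
        exact (convex_convexHull ℝ _) h₁ h₂ ha hb hab
      intro z hz
      refine convexHull_min ?_ hconvS hz
      intro z' hzt'
      obtain ⟨a, ha, rfl⟩ := Finset.mem_image.mp (Finset.mem_coe.mp hzt')
      exact hmapgen a ha κ hκpos.le le_rfl
    have hq : p + κ • x' ∈ convexHull ℝ (↑t : Set (Euc d)) := hgt' x' hx'
    have hxεmem : p + ε • x' ∈ convexHull ℝ (↑t : Set (Euc d)) := by
      have hp' : p ∈ convexHull ℝ (↑t : Set (Euc d)) :=
        subset_convexHull ℝ _ (Finset.mem_coe.mpr hpt)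
      have h1 : p + ε • x' = p + (ε / κ) • ((p + κ • x') - p) := by
        rw [add_sub_cancel_left, smul_smul]
        congr 1
        congr 1
        field_simp
      rw [h1]
      exact hcomb _ (convex_convexHull ℝ _) p hp' _ hq _ (by positivity)
        (by rw [div_le_one hκpos]; exact hεκ)
    set c : Fin (k+1) → ℝ := fun j => ⟪v' j, x'⟫ with hc
    set Sj : Fin (k+1) → Finset ℝ :=
      fun j => (t'.image (fun z => ⟪v' j, z - x'⟫)).filter (fun q => 0 < q) with hSj
    set σ : Fin (k+1) → ℝ := fun j => if h : (Sj j).Nonempty then (Sj j).min' h else 1 with hσ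
    have hσpos : ∀ j, 0 < σ j := by
      intro j
      by_cases h : (Sj j).Nonempty
      · have hm := (Sj j).min'_mem h
        have h2 := (Finset.mem_filter.mp hm).2
        simp only [hσ]; rw [dif_pos h]; exact h2
      · simp only [hσ]; rw [dif_neg h]; norm_num
    have hσle : ∀ j, ∀ z ∈ t', 0 < ⟪v' j, z - x'⟫ → σ j ≤ ⟪v' j, z - x'⟫ := by
      intro j z hz hpos
      have hmem : ⟪v' j, z - x'⟫ ∈ Sj j :=
        Finset.mem_filter.mpr ⟨Finset.mem_image_of_mem _ hz, hpos⟩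
      have hne : (Sj j).Nonempty := ⟨_, hmem⟩
      simp only [hσ]; rw [dif_pos hne]
      exact Finset.min'_le _ _ hmem
    set vv : Fin (k+1+1) → Euc d := Fin.cons n (fun j => v' j - (c j + σ j) • n) with hvv
    refine ⟨p + ε • x', hxεmem, vv, ?_⟩
    intro F hF hne
    by_cases hpF : p ∈ F
    · -- faces containing p : use the vertex figure
      set u1 := t.filter (fun b => b ∈ F) with hu1
      set u2 := u1.erase p with hu2
      set B := u2.image φ with hB
      have hu2mem : ∀ b ∈ u2, b ∈ t ∧ b ∈ F ∧ b ≠ p := by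
        intro b hb
        have h1 := Finset.mem_erase.mp hb
        have h2 := Finset.mem_filter.mp h1.2
        exact ⟨h2.1, h2.2, h1.1⟩
      have hBt' : B ⊆ t' := by
        intro z hz
        obtain ⟨b, hb, rfl⟩ := Finset.mem_image.mp hz
        obtain ⟨hbt, hbF, hbp⟩ := hu2mem b hb
        exact Finset.mem_image_of_mem φ (Finset.mem_erase.mpr ⟨hbp, hbt⟩)
      set F' := convexHull ℝ (↑B : Set (Euc d)) with hF'
      have hgF : ∀ m ∈ F', p + κ • m ∈ F := by
        have hconvS : Convex ℝ {z : Euc d | p + κ • z ∈ F} := by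
          intro z₁ h₁ z₂ h₂ a b ha hb hab
          simp only [Set.mem_setOf_eq] at h₁ h₂ ⊢
          have heq : p + κ • (a • z₁ + b • z₂) = a • (p + κ • z₁) + b • (p + κ • z₂) := by
            have h' : a • (p + κ • z₁) + b • (p + κ • z₂) = (a + b) • p + κ • (a • z₁ + b • z₂) := by
              module
            rw [h', hab, one_smul]
          rw [heq]
          exact hF.2.1 h₁ h₂ ha hb hab
        intro m hm
        refine convexHull_min ?_ hconvS hm
        intro z hzB
        obtain ⟨b, hb, rfl⟩ := Finset.mem_image.mp (Finset.mem_coe.mp hzB)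
        obtain ⟨hbt, hbF, hbp⟩ := hu2mem b hb
        have hbte : b ∈ te := Finset.mem_erase.mpr ⟨hbp, hbt⟩
        simp only [Set.mem_setOf_eq]
        have heq : p + κ • φ b = p + (κ * (r b)⁻¹) • (b - p) := by
          simp only [hφ, smul_smul]
        rw [heq]
        refine hcomb _ hF.2.1 p hpF b hbF _ ?_ ?_
        · have := (hr b hbte).le; positivity
        · rw [← div_eq_mul_inv, div_le_one (hr b hbte)]; exact hκle b hbte
      have hmemF' : ∀ z ∈ convexHull ℝ (↑t' : Set (Euc d)), p + κ • z ∈ F → z ∈ F' := by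
        intro z hz hzF
        have h1 : ⟪n, z⟫ = 1 := hull_n1 z hz
        have hy := face_carrier hF hzF
        have hset : (↑t : Set (Euc d)) ∩ F = ↑u1 := by
          rw [hu1]; ext b
          simp [Finset.mem_filter]
        rw [hset, Finset.convexHull_eq] at hy
        obtain ⟨ω, hω0, hω1, hωc⟩ := hy
        have hsum1 : ∑ b ∈ u1, ω b • (b - p) = κ • z := by
          have h2 : ∑ b ∈ u1, ω b • (b : Euc d) = p + κ • z := by
            have h3 := hωc
            rw [Finset.centerMass, hω1] at h3
            simpa using h3
          have h4 : ∑ b ∈ u1, ω b • (p : Euc d) = p := by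
            rw [← Finset.sum_smul, hω1, one_smul]
          calc ∑ b ∈ u1, ω b • (b - p)
              = (∑ b ∈ u1, ω b • (b : Euc d)) - ∑ b ∈ u1, ω b • (p : Euc d) := by
                rw [← Finset.sum_sub_distrib]
                exact Finset.sum_congr rfl (fun b _ => smul_sub (ω b) b p)
            _ = (p + κ • z) - p := by rw [h2, h4]
            _ = κ • z := add_sub_cancel_left p _
        have hsum2 : ∑ b ∈ u2, ω b • (b - p) = κ • z := by
          rw [hu2, Finset.sum_erase]
          · exact hsum1
          · simp
        set W : Euc d → ℝ := fun b => ω b * r b with hWdef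
        have hWφ : ∀ b ∈ u2, W b • φ b = ω b • (b - p) := by
          intro b hb
          obtain ⟨hbt, hbF, hbp⟩ := hu2mem b hb
          have hbte : b ∈ te := Finset.mem_erase.mpr ⟨hbp, hbt⟩
          simp only [hWdef, hφ, smul_smul]
          congr 1
          field_simp [(hr b hbte).ne']
        have hsum3 : ∑ b ∈ u2, W b • φ b = κ • z := by
          rw [Finset.sum_congr rfl hWφ]; exact hsum2
        have hWsum : ∑ b ∈ u2, W b = κ := by
          have h5 : ∀ b ∈ u2, W b = ⟪n, ω b • (b - p)⟫ := by
            intro b hb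
            rw [real_inner_smul_right, hnr]
          rw [Finset.sum_congr rfl h5, ← inner_sum, hsum2, real_inner_smul_right, h1, mul_one]
        have hWnn : ∀ b ∈ u2, 0 ≤ W b := by
          intro b hb
          obtain ⟨hbt, hbF, hbp⟩ := hu2mem b hb
          have hbte : b ∈ te := Finset.mem_erase.mpr ⟨hbp, hbt⟩
          exact mul_nonneg (hω0 b (Finset.mem_of_mem_erase hb)) (hr b hbte).le
        have hcm : u2.centerMass W φ = z := by
          rw [Finset.centerMass, hWsum, hsum3, smul_smul, inv_mul_cancel₀ hκpos.ne', one_smul]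
        rw [hF', ← hcm]
        exact Finset.centerMass_mem_convexHull _ hWnn (by rw [hWsum]; exact hκpos)
          (fun b hb => Finset.mem_coe.mpr (Finset.mem_image_of_mem φ hb))
      have hF'ne : F' ≠ convexHull ℝ (↑t' : Set (Euc d)) := by
        intro heq
        apply hne
        refine Set.Subset.antisymm hF.1 ?_
        have htF : ∀ a : Euc d, a ∈ t → a ∈ F := by
          intro a hat
          by_cases hap : a = p
          · exact hap ▸ hpF
          · have hate : a ∈ te := Finset.mem_erase.mpr ⟨hap, hat⟩
            have hφa : φ a ∈ F' := by
              rw [heq]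
              exact subset_convexHull ℝ _ (Finset.mem_coe.mpr (Finset.mem_image_of_mem φ hate))
            have h2 : p + κ • φ a ∈ F := hgF _ hφa
            have heq2 : p + κ • φ a = p + (κ * (r a)⁻¹) • (a - p) := by
              simp only [hφ, smul_smul]
            set ρ : ℝ := κ * (r a)⁻¹ with hρ
            have h2' : p + ρ • (a - p) ∈ F := by rw [← heq2]; exact h2
            have hρpos : 0 < ρ := by
              have := hr a hate
              positivity
            have hρle : ρ ≤ 1 := by
              rw [hρ, ← div_eq_mul_inv, div_le_one (hr a hate)]; exact hκle a hate
            rcases eq_or_lt_of_le hρle with hρ1 | hρ1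
            · have heq3 : p + ρ • (a - p) = a := by rw [hρ1]; module
              rw [heq3] at h2'; exact h2'
            · have hopen : p + ρ • (a - p) ∈ openSegment ℝ p a :=
                ⟨1 - ρ, ρ, by linarith, hρpos, by ring, by module⟩
              have hseg := hF.2.2 p (subset_convexHull ℝ _ (Finset.mem_coe.mpr hpt)) a
                (subset_convexHull ℝ _ (Finset.mem_coe.mpr hat)) ⟨_, hopen, h2'⟩
              exact hseg (right_mem_segment ℝ p a)
        exact convexHull_min (fun a ha => htF a (Finset.mem_coe.mp ha)) hF.2.1
      have hF'face : IsFace (convexHull ℝ (↑t' : Set (Euc d))) F' := by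
        refine ⟨convexHull_mono (Finset.coe_subset.mpr hBt'), convex_convexHull ℝ _, ?_⟩
        rintro z₁ hz₁ z₂ hz₂ ⟨m, hmseg, hmF'⟩
        have h₁ : p + κ • z₁ ∈ convexHull ℝ (↑t : Set (Euc d)) := hgt' z₁ hz₁
        have h₂ : p + κ • z₂ ∈ convexHull ℝ (↑t : Set (Euc d)) := hgt' z₂ hz₂
        have hmF : p + κ • m ∈ F := hgF m hmF'
        obtain ⟨a, b, ha, hb, hab, hmeq⟩ := hmseg
        have hmo : p + κ • m ∈ openSegment ℝ (p + κ • z₁) (p + κ • z₂) := by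
          refine ⟨a, b, ha, hb, hab, ?_⟩
          rw [← hmeq]
          have h' : a • (p + κ • z₁) + b • (p + κ • z₂) = (a + b) • p + κ • (a • z₁ + b • z₂) := by
            module
          rw [h', hab, one_smul]
        have hsegF := hF.2.2 _ h₁ _ h₂ ⟨_, hmo, hmF⟩
        have e₁ : p + κ • z₁ ∈ F := hsegF (left_mem_segment ℝ _ _)
        have e₂ : p + κ • z₂ ∈ F := hsegF (right_mem_segment ℝ _ _)
        exact (convex_convexHull ℝ _).segment_subset (hmemF' z₁ hz₁ e₁) (hmemF' z₂ hz₂ e₂)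
      obtain ⟨j, hj⟩ := hv' F' hF'face hF'ne
      refine ⟨Fin.succ j, ?_⟩
      have hvvj : vv (Fin.succ j) = v' j - (c j + σ j) • n := by
        simp only [hvv]; rw [Fin.cons_succ]
      intro y hy
      have hbase : ⟪v' j - (c j + σ j) • n, p - (p + ε • x')⟫ = ε * σ j := by
        have h0 : p - (p + ε • x') = -(ε • x') := by module
        have h1 : ⟪v' j - (c j + σ j) • n, ε • x'⟫ = ε * (c j - (c j + σ j)) := by
          rw [real_inner_smul_right, inner_sub_left, real_inner_smul_left, hx'1]
          simp only [hc]
          ring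
        rw [h0, inner_neg_right, h1]; ring
      have hbnd : ∀ b ∈ (↑t : Set (Euc d)) ∩ F,
          ε * σ j ≤ ⟪v' j - (c j + σ j) • n, b - (p + ε • x')⟫ := by
        rintro b ⟨hbt, hbF⟩
        have hbt' : b ∈ t := Finset.mem_coe.mp hbt
        by_cases hbp : b = p
        · subst hbp
          exact le_of_eq hbase.symm
        · have hbte : b ∈ te := Finset.mem_erase.mpr ⟨hbp, hbt'⟩
          have hbu2 : b ∈ u2 := Finset.mem_erase.mpr ⟨hbp, Finset.mem_filter.mpr ⟨hbt', hbF⟩⟩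
          have hφB : φ b ∈ F' :=
            subset_convexHull ℝ _ (Finset.mem_coe.mpr (Finset.mem_image_of_mem φ hbu2))
          have hφt' : φ b ∈ t' := Finset.mem_image_of_mem φ hbte
          have hposb := hj (φ b) hφB
          have hσb := hσle j (φ b) hφt' hposb
          have hsplit : b - (p + ε • x') = (b - p) + (p - (p + ε • x')) := by abel
          have hinner1 : ⟪v' j - (c j + σ j) • n, b - p⟫ = r b * (⟪v' j, φ b - x'⟫ - σ j) := by
            have hbp' : b - p = r b • φ b := by
              simp only [hφ, smul_smul]
              rw [mul_inv_cancel₀ (hr b hbte).ne', one_smul]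
            rw [hbp', real_inner_smul_right]
            have h2 : ⟪v' j - (c j + σ j) • n, φ b⟫ = ⟪v' j, φ b⟫ - (c j + σ j) := by
              rw [inner_sub_left, real_inner_smul_left, hφ1 b hbte, mul_one]
            have h3 : ⟪v' j, φ b - x'⟫ = ⟪v' j, φ b⟫ - c j := by
              rw [inner_sub_right]
            rw [h2, h3]; ring
          rw [hsplit, inner_add_right, hinner1, hbase]
          have h4 : 0 ≤ r b * (⟪v' j, φ b - x'⟫ - σ j) :=
            mul_nonneg (hr b hbte).le (by linarith)
          linarith
      have hyh := face_carrier hF hy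
      have hres := hull_inner_bound hbnd y hyh
      rw [hvvj]
      have hfin : 0 < ε * σ j := mul_pos hεpos (hσpos j)
      linarith
    · -- faces avoiding p : use the exposing functional
      refine ⟨0, ?_⟩
      have hvv0 : vv 0 = n := by simp only [hvv]; rw [Fin.cons_zero]
      intro y hy
      have hbnd : ∀ b ∈ (↑t : Set (Euc d)) ∩ F, (M - μ)/2 ≤ ⟪n, b - (p + ε • x')⟫ := by
        rintro b ⟨hbt, hbF⟩
        have hbt' : b ∈ t := Finset.mem_coe.mp hbt
        have hbp : b ≠ p := fun h => hpF (h ▸ hbF)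
        have hbte : b ∈ te := Finset.mem_erase.mpr ⟨hbp, hbt'⟩
        have h1 : ⟪p, b⟫ ≤ μ := Finset.le_sup' (fun a => ⟪p, a⟫) hbte
        have h2 : ⟪n, b - (p + ε • x')⟫ = M - ⟪p, b⟫ + ε * ⟪p, x'⟫ := by
          simp only [hn, hM, inner_neg_left, inner_sub_right, inner_add_right,
            real_inner_smul_right]
          ring
        have h3 : ε * |⟪p, x'⟫| ≤ (M - μ)/2 := by
          have ha2 : ε * |⟪p, x'⟫| ≤ ε₁ * |⟪p, x'⟫| :=
            mul_le_mul_of_nonneg_right hεε₁ (abs_nonneg _)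
          have ha3 : ε₁ * |⟪p, x'⟫| ≤ (M - μ)/2 := by
            rw [hε₁def, div_mul_eq_mul_div, div_le_div_iff₀ (by positivity) (by norm_num)]
            nlinarith [abs_nonneg ⟪p, x'⟫]
          linarith
        have ha0 : -(ε * |⟪p, x'⟫|) ≤ ε * ⟪p, x'⟫ := by
          nlinarith [neg_abs_le ⟪p, x'⟫, hεpos.le]
        rw [h2]; linarith
      have hyh := face_carrier hF hy
      have hres := hull_inner_bound hbnd y hyh
      rw [hvv0]
      linarith

end Aux
/-- For any convex polytope `P ⊆ ℝ^d`, `d > 2`, with nonempty interior, there are an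
interior point `x` of `P` and `d + 1` open halfspaces whose boundary hyperplanes all
contain `x` such that every proper face of `P` is contained in one of the halfspaces. -/
theorem stmt13 (d : ℕ) (hd : 2 < d) (s : Finset (Euc d)) (P : Set (Euc d))
    (hP : P = convexHull ℝ (↑s : Set (Euc d))) (hint : (interior P).Nonempty) :
    ∃ x ∈ interior P, ∃ v : Fin (d + 1) → Euc d, (∀ i, v i ≠ 0) ∧
      ∀ F, IsFace P F → F ≠ P → ∃ i, F ⊆ {y | 0 < ⟪v i, y - x⟫} := by
  classical
  have hs : s.Nonempty := by
    rcases s.eq_empty_or_nonempty with h | h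
    · exfalso
      rw [hP, h] at hint
      simp at hint
    · exact h
  have hrank : Module.finrank ℝ (vectorSpan ℝ (↑s : Set (Euc d))) ≤ d := by
    have h1 := Submodule.finrank_le (vectorSpan ℝ (↑s : Set (Euc d)))
    rwa [finrank_euclideanSpace_fin] at h1
  obtain ⟨x₀, hx₀, v₀, hv₀⟩ := key d d s hs hrank
  obtain ⟨z₀, hz₀⟩ := hint
  rw [← hP] at hx₀ hv₀
  -- uniform positive margin over all vertices and directions
  set Mi : Fin (d+1) → Finset ℝ :=
    fun i => (s.image (fun b => ⟪v₀ i, b - x₀⟫)).filter (fun q => 0 < q) with hMi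
  set mi : Fin (d+1) → ℝ := fun i => if h : (Mi i).Nonempty then (Mi i).min' h else 1 with hmi
  have hmipos : ∀ i, 0 < mi i := by
    intro i
    by_cases h : (Mi i).Nonempty
    · have hm := (Mi i).min'_mem h
      have h2 := (Finset.mem_filter.mp hm).2
      simp only [hmi]; rw [dif_pos h]; exact h2
    · simp only [hmi]; rw [dif_neg h]; norm_num
  have hmile : ∀ i, ∀ b ∈ s, 0 < ⟪v₀ i, b - x₀⟫ → mi i ≤ ⟪v₀ i, b - x₀⟫ := by
    intro i b hb hpos
    have hmem : ⟪v₀ i, b - x₀⟫ ∈ Mi i :=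
      Finset.mem_filter.mpr ⟨Finset.mem_image_of_mem _ hb, hpos⟩
    simp only [hmi]; rw [dif_pos ⟨_, hmem⟩]
    exact Finset.min'_le _ _ hmem
  have huniv : (Finset.univ : Finset (Fin (d+1))).Nonempty := Finset.univ_nonempty
  set m : ℝ := (Finset.univ.image mi).min' (huniv.image mi) with hm
  have hmpos : 0 < m := by
    have h1 := (Finset.univ.image mi).min'_mem (huniv.image mi)
    rw [← hm] at h1
    obtain ⟨i, _, hi⟩ := Finset.mem_image.mp h1
    rw [← hi]; exact hmipos i
  have hmle : ∀ i, m ≤ mi i := by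
    intro i
    exact Finset.min'_le _ _ (Finset.mem_image_of_mem mi (Finset.mem_univ i))
  set C : ℝ := Finset.univ.sup' huniv (fun i => |⟪v₀ i, z₀ - x₀⟫|) with hC
  have hC0 : 0 ≤ C :=
    le_trans (abs_nonneg _) (Finset.le_sup' (fun i => |⟪v₀ i, z₀ - x₀⟫|) (Finset.mem_univ 0))
  set θ : ℝ := min (1/2) (m / (2*(1+C))) with hθ
  have hθpos : 0 < θ := lt_min (by norm_num) (div_pos hmpos (by positivity))
  have hθle1 : θ ≤ 1 := le_trans (min_le_left _ _) (by norm_num)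
  have hθC : θ * C ≤ m / 2 := by
    have h1 : θ * C ≤ (m / (2*(1+C))) * C :=
      mul_le_mul_of_nonneg_right (min_le_right _ _) hC0
    have h2 : (m / (2*(1+C))) * C ≤ m / 2 := by
      rw [div_mul_eq_mul_div, div_le_div_iff₀ (by positivity) (by norm_num)]
      nlinarith
    linarith
  set x : Euc d := x₀ + θ • (z₀ - x₀) with hx
  have hxint : x ∈ interior P := by
    have hPconv : Convex ℝ P := hP ▸ convex_convexHull ℝ _
    exact hPconv.add_smul_sub_mem_interior hx₀ hz₀ ⟨hθpos, hθle1⟩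
  have hd0 : 0 < d := by omega
  set e₀ : Euc d := EuclideanSpace.single (⟨0, hd0⟩ : Fin d) (1:ℝ) with he₀def
  have he₀ : e₀ ≠ 0 := by
    intro h
    have h1 := congrArg (fun f : Euc d => f (⟨0, hd0⟩ : Fin d)) h
    rw [he₀def] at h1
    simp [EuclideanSpace.single_apply] at h1
  set v : Fin (d+1) → Euc d := fun i => if v₀ i = 0 then e₀ else v₀ i with hv
  refine ⟨x, hxint, v, ?_, ?_⟩
  · intro i
    show (if v₀ i = 0 then e₀ else v₀ i) ≠ 0
    by_cases h : v₀ i = 0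
    · rw [if_pos h]; exact he₀
    · rw [if_neg h]; exact h
  · intro F hFace hne
    rcases F.eq_empty_or_nonempty with rfl | ⟨y₀, hy₀⟩
    · exact ⟨0, by simp⟩
    obtain ⟨i, hi⟩ := hv₀ F hFace hne
    have hvne : v₀ i ≠ 0 := by
      intro h0
      have h1 := hi y₀ hy₀
      rw [h0, inner_zero_left] at h1
      exact lt_irrefl 0 h1
    refine ⟨i, ?_⟩
    intro y hy
    have hFace' : IsFace (convexHull ℝ (↑s : Set (Euc d))) F := hP ▸ hFace
    have hyh : y ∈ convexHull ℝ ((↑s : Set (Euc d)) ∩ F) := face_carrier hFace' hy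
    have hbnd : ∀ b ∈ (↑s : Set (Euc d)) ∩ F, m/2 ≤ ⟪v₀ i, b - x⟫ := by
      rintro b ⟨hbs, hbF⟩
      have h1 : 0 < ⟪v₀ i, b - x₀⟫ := hi b hbF
      have h2 : m ≤ ⟪v₀ i, b - x₀⟫ := le_trans (hmle i) (hmile i b (Finset.mem_coe.mp hbs) h1)
      have h3 : ⟪v₀ i, b - x⟫ = ⟪v₀ i, b - x₀⟫ - θ * ⟪v₀ i, z₀ - x₀⟫ := by
        have hsplit : b - x = (b - x₀) - θ • (z₀ - x₀) := by rw [hx]; module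
        rw [hsplit, inner_sub_right, real_inner_smul_right]
      have h4 : θ * ⟪v₀ i, z₀ - x₀⟫ ≤ θ * |⟪v₀ i, z₀ - x₀⟫| :=
        mul_le_mul_of_nonneg_left (le_abs_self _) hθpos.le
      have h5 : |⟪v₀ i, z₀ - x₀⟫| ≤ C :=
        Finset.le_sup' (fun i => |⟪v₀ i, z₀ - x₀⟫|) (Finset.mem_univ i)
      have h6 : θ * |⟪v₀ i, z₀ - x₀⟫| ≤ θ * C := mul_le_mul_of_nonneg_left h5 hθpos.le
      rw [h3]; linarith
    have hres := hull_inner_bound hbnd y hyh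
    simp only [Set.mem_setOf_eq]
    rw [show v i = v₀ i from if_neg hvne]
    linarith
end
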